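/- arXiv:2210.14762 — 5 statements merged into one kernel-verified Lean document; each statement's English description precedes it below -/
import Mathlib

section
/- Every 3-colorable finite simple graph is word-representable. -/
/-- Letters `x` and `y` alternate in the word `w`: after deleting all letters other than
`x` and `y`, no two consecutive letters of the remaining word are equal. -/
def Alternate {V : Type*} [DecidableEq V] (w : List V) (x y : V) : Prop :=
  (w.filter (fun z => decide (z = x ∨ z = y))).Chain' (· ≠ ·)

/-- A simple graph `G` is word-representable if there is a word over its vertex set,
containing every vertex, such that two distinct letters alternate in the word
if and only if they are adjacent in `G`. -/
def WordRepresentable {V : Type*} [DecidableEq V] (G : SimpleGraph V) : Prop :=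
  ∃ w : List V, (∀ v : V, v ∈ w) ∧ ∀ x y : V, x ≠ y → (G.Adj x y ↔ Alternate w x y)

/-- `rel` is an orientation of the simple graph `G`: every arc lies on an edge of `G`,
and every edge of `G` is oriented in exactly one of the two directions. -/
def IsOrientation {V : Type*} (G : SimpleGraph V) (rel : V → V → Prop) : Prop :=
  (∀ x y, rel x y → G.Adj x y) ∧ (∀ x y, G.Adj x y → (rel x y ↔ ¬ rel y x))

/-- An orientation `rel` of `G` is semi-transitive: it is acyclic, and for every directed
path `p 0 → p 1 → ⋯ → p k`, either the endpoints are non-adjacent in `G`, or there is an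
arc `p i → p j` for all `i < j`. -/
def IsSemiTransitive {V : Type*} (G : SimpleGraph V) (rel : V → V → Prop) : Prop :=
  (∀ v, ¬ Relation.TransGen rel v v) ∧
  ∀ (k : ℕ) (p : Fin (k + 1) → V),
    (∀ i : Fin k, rel (p i.castSucc) (p i.succ)) →
    (¬ G.Adj (p 0) (p (Fin.last k)) ∨ ∀ i j : Fin (k + 1), i < j → rel (p i) (p j))

/-- `v` is obtained from `u` by deleting the first letter and appending a letter at the end:
`v i = u (i+1)` for all `i < n - 1`. -/
def debruijnShift (n k : ℕ) (u v : Fin n → Fin k) : Prop :=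
  ∀ (i : ℕ) (h : i + 1 < n), v ⟨i, Nat.lt_of_succ_lt h⟩ = u ⟨i + 1, h⟩

/-- The simplified de Bruijn graph `S(n,k)`: vertices are words of length `n` over a
`k`-letter alphabet; distinct words are adjacent if one is obtained from the other by
deleting the first letter and appending a letter at the end. -/
def simplifiedDeBruijn (n k : ℕ) : SimpleGraph (Fin n → Fin k) :=
  SimpleGraph.fromRel (debruijnShift n k)

namespace WR3
open List

open List

section ListHelpers
variable {α : Type*}

lemma not_chain'_dup (W1 W2 : List α) (c : α) :
    ¬ (W1 ++ c :: c :: W2).Chain' (· ≠ ·) := by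
  intro h
  have h2 := (List.isChain_append.mp h).2.1
  exact (List.isChain_cons_cons.mp h2).1 rfl

lemma flatten_ends {u v : α} :
    ∀ {l : List (List α)}, (∀ s ∈ l, s = [u, v]) → l ≠ [] → ∃ W, l.flatten = W ++ [v]
  | [], h, h0 => absurd rfl h0
  | s :: t, h, _ => by
    have hs : s = [u, v] := h s (by simp)
    rcases eq_or_ne t [] with rfl | ht
    · exact ⟨[u], by simp [hs]⟩
    · obtain ⟨W, hW⟩ := flatten_ends (fun s hs => h s (by simp [hs])) ht
      exact ⟨s ++ W, by simp [hW, hs]⟩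

lemma head_mem_flatten_eq {u v : α} {l : List (List α)} (h : ∀ s ∈ l, s = [u, v])
    {r : List α} (hr : ∀ a ∈ r.head?, a = u) :
    ∀ a ∈ (l.flatten ++ r).head?, a = u := by
  cases l with
  | nil => simpa using hr
  | cons s t =>
    have hs : s = [u, v] := h s (by simp)
    subst hs
    simp

lemma chain'_flatten_alt {u v : α} (huv : u ≠ v) :
    ∀ (l : List (List α)) (r : List α), (∀ s ∈ l, s = [u, v]) →
      r.Chain' (· ≠ ·) → (∀ a ∈ r.head?, a = u) →
      (l.flatten ++ r).Chain' (· ≠ ·)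
  | [], r, _, hr, _ => by simpa using hr
  | s :: t, r, h, hr, hh => by
    have hs : s = [u, v] := h s (by simp)
    subst hs
    have ht : ∀ s ∈ t, s = [u, v] := fun s hs => h s (by simp [hs])
    have ih := chain'_flatten_alt huv t r ht hr hh
    have hhead := head_mem_flatten_eq ht hh
    simp only [flatten_cons, cons_append, append_assoc]
    refine List.isChain_cons.mpr ⟨by simp [huv], List.isChain_cons.mpr ⟨?_, ?_⟩⟩
    · intro a ha
      have := hhead a (by simpa using ha)
      subst this
      exact huv.symm
    · simpa [List.Chain'] using ih

lemma exists_adj_ne : ∀ (l : List α), (∃ x ∈ l, ∃ y ∈ l, x ≠ y) →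
    ∃ l1 s t l2, l = l1 ++ s :: t :: l2 ∧ s ≠ t
  | [], h => by simp at h
  | c :: ts, h => by
    by_cases hts : ∃ x ∈ ts, ∃ y ∈ ts, x ≠ y
    · obtain ⟨l1, s, t, l2, hl, hst⟩ := exists_adj_ne ts hts
      exact ⟨c :: l1, s, t, l2, by simp [hl], hst⟩
    · push_neg at hts
      obtain ⟨x, hx, y, hy, hxy⟩ := h
      rcases ts with _ | ⟨d, t'⟩
      · simp only [List.mem_singleton] at hx hy
        exact absurd (hx.trans hy.symm) hxy
      · by_cases hcd : c = d
        · exfalso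
          have hall : ∀ z ∈ c :: d :: t', z = d := by
            intro z hz
            rcases List.mem_cons.mp hz with rfl | hz
            · exact hcd
            · exact hts z hz d (by simp)
          exact hxy ((hall x hx).trans (hall y hy).symm)
        · exact ⟨[], c, d, t', rfl, hcd⟩

lemma nodup_mem_eq_singleton {l : List α} {x : α} (hnd : l.Nodup) (hm : ∀ z, z ∈ l ↔ z = x) :
    l = [x] := by
  cases l with
  | nil => exact absurd ((hm x).mpr rfl) (by simp)
  | cons a t =>
    have ha : a = x := (hm a).mp (by simp)
    subst ha
    cases t with
    | nil => rfl
    | cons b t' =>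
      have hb : b = a := (hm b).mp (by simp)
      subst hb
      simp at hnd

end ListHelpers


open List

variable {V : Type*} [DecidableEq V] [Fintype V]

/-- A "block": all vertices `v` with `k v < N`, listed in increasing order of key `k`. -/
noncomputable def blk (N : ℕ) (k : V → ℕ) : List V :=
  ((List.range N).map (fun m => (Finset.univ.filter (fun v => k v = m)).toList)).flatten

lemma mem_blk {N : ℕ} {k : V → ℕ} {v : V} (h : k v < N) : v ∈ blk N k := by
  unfold blk
  rw [List.mem_flatten]
  exact ⟨(Finset.univ.filter (fun w => k w = k v)).toList,
    List.mem_map.mpr ⟨k v, List.mem_range.mpr h, rfl⟩,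
    Finset.mem_toList.mpr (Finset.mem_filter.mpr ⟨Finset.mem_univ v, rfl⟩)⟩

lemma bucket_filter {k : V → ℕ} {x y : V} (hxy : x ≠ y) (hk : k x ≠ k y) (m : ℕ) :
    ((Finset.univ.filter (fun v => k v = m)).toList).filter (fun z => decide (z = x ∨ z = y)) =
      if m = k x then [x] else if m = k y then [y] else [] := by
  have hnd : (((Finset.univ.filter (fun v => k v = m)).toList).filter
      (fun z => decide (z = x ∨ z = y))).Nodup := (Finset.nodup_toList _).filter _
  have hm : ∀ z, z ∈ ((Finset.univ.filter (fun v => k v = m)).toList).filter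
      (fun z => decide (z = x ∨ z = y)) ↔ (k z = m ∧ (z = x ∨ z = y)) := by
    intro z
    simp [List.mem_filter, Finset.mem_toList, Finset.mem_filter]
  split_ifs with h1 h2
  · subst h1
    refine nodup_mem_eq_singleton hnd (fun z => ?_)
    rw [hm]
    constructor
    · rintro ⟨hkz, rfl | rfl⟩
      · rfl
      · exact absurd hkz.symm hk
    · rintro rfl; exact ⟨rfl, Or.inl rfl⟩
  · subst h2
    refine nodup_mem_eq_singleton hnd (fun z => ?_)
    rw [hm]
    constructor
    · rintro ⟨hkz, rfl | rfl⟩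
      · exact absurd hkz (fun h => h1 h.symm)
      · rfl
    · rintro rfl; exact ⟨rfl, Or.inr rfl⟩
  · rw [List.eq_nil_iff_forall_not_mem]
    intro z hz
    rcases (hm z).mp hz with ⟨hkz, rfl | rfl⟩
    · exact h1 hkz.symm
    · exact h2 hkz.symm

lemma flatten_range_two {α : Type*} (x y : α) :
    ∀ (N p q : ℕ), p ≠ q →
    ((List.range N).map (fun m => if m = p then [x] else if m = q then [y] else [])).flatten =
      if p < N then (if q < N then (if p < q then [x, y] else [y, x]) else [x])
      else if q < N then [y] else []
  | 0, p, q, _ => by simp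
  | (N+1), p, q, h => by
    rw [List.range_succ, List.map_append, List.flatten_append, flatten_range_two x y N p q h]
    simp only [List.map_cons, List.map_nil, List.flatten_cons, List.flatten_nil, List.append_nil]
    split_ifs <;> first | rfl | omega | simp | (exfalso; omega)



open List

variable {V : Type*} [DecidableEq V] [Fintype V]

def K1 (n : ℕ) (ι : V → ℕ) (χ : V → Fin 3) : V → ℕ :=
  fun v => (if χ v = 1 then 0 else if χ v = 0 then 4*n else 8*n) + 4 * ι v

def K2 (n : ℕ) (ι : V → ℕ) (χ : V → Fin 3) : V → ℕ :=
  fun v => (if χ v = 0 then 0 else if χ v = 2 then 4*n else 8*n) + 4 * ι v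

def KM (n : ℕ) (ι : V → ℕ) (χ : V → Fin 3) : V → ℕ :=
  fun v => if χ v = 1 then 4 * ι v else 12 * n + ι v

def dv (K : V → ℕ) (m : ℕ) (u w : V) : V → ℕ :=
  fun z => if z = u then m - 2 else if z = w then m - 1 else K z

def sw (K : V → ℕ) (u w : V) : V → ℕ := fun z => K (Equiv.swap u w z)

def dAB (n : ℕ) (ι : V → ℕ) (χ : V → Fin 3) (Eb : V → V → Bool) (p : V × V) : V → ℕ :=
  if χ p.1 = 0 ∧ χ p.2 = 1 ∧ Eb p.1 p.2 = false ∧ p.1 ≠ p.2 then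
    dv (K1 n ι χ) (4*n) p.1 p.2 else K1 n ι χ

def dAC (n : ℕ) (ι : V → ℕ) (χ : V → Fin 3) (Eb : V → V → Bool) (p : V × V) : V → ℕ :=
  if χ p.1 = 0 ∧ χ p.2 = 2 ∧ Eb p.1 p.2 = false ∧ p.1 ≠ p.2 then
    dv (K1 n ι χ) (8*n) p.2 p.1 else K1 n ι χ

def dSW (n : ℕ) (ι : V → ℕ) (χ : V → Fin 3) (p : V × V) : V → ℕ :=
  if χ p.1 = χ p.2 ∧ p.1 ≠ p.2 then sw (K1 n ι χ) p.1 p.2 else K1 n ι χ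

def dBC (n : ℕ) (ι : V → ℕ) (χ : V → Fin 3) (Eb : V → V → Bool) (p : V × V) : V → ℕ :=
  if χ p.1 = 1 ∧ χ p.2 = 2 ∧ Eb p.1 p.2 = false ∧ p.1 ≠ p.2 then
    dv (K2 n ι χ) (8*n) p.1 p.2 else K2 n ι χ

section Facts
variable {n : ℕ} {ι : V → ℕ} {χ : V → Fin 3} {Eb : V → V → Bool}

/- ---- bounds ---- -/
lemma K1_lt (hn : ∀ v, ι v < n) (v : V) : K1 n ι χ v < 12 * n := by
  have := hn v; simp only [K1]; split_ifs <;> omega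

lemma K2_lt (hn : ∀ v, ι v < n) (v : V) : K2 n ι χ v < 12 * n := by
  have := hn v; simp only [K2]; split_ifs <;> omega

lemma dAB_lt (hn : ∀ v, ι v < n) (p : V × V) (v : V) : dAB n ι χ Eb p v < 12 * n := by
  have := hn v; simp only [dAB]
  split_ifs <;> simp only [dv, K1] <;> split_ifs <;> omega

lemma dAC_lt (hn : ∀ v, ι v < n) (p : V × V) (v : V) : dAC n ι χ Eb p v < 12 * n := by
  have := hn v; simp only [dAC]
  split_ifs <;> simp only [dv, K1] <;> split_ifs <;> omega

lemma dSW_lt (hn : ∀ v, ι v < n) (p : V × V) (v : V) : dSW n ι χ p v < 12 * n := by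
  have h1 := hn (Equiv.swap p.1 p.2 v); have := hn v
  simp only [dSW]
  split_ifs <;> simp only [sw, K1] <;> split_ifs <;> omega

lemma dBC_lt (hn : ∀ v, ι v < n) (p : V × V) (v : V) : dBC n ι χ Eb p v < 12 * n := by
  have := hn v; simp only [dBC]
  split_ifs <;> simp only [dv, K2] <;> split_ifs <;> omega

/- ---- injectivity ---- -/
lemma K1_inj (hn : ∀ v, ι v < n) (hinj : Function.Injective ι) :
    Function.Injective (K1 n ι χ) := by
  intro v w h
  have hv := hn v; have hw := hn w
  apply hinj
  simp only [K1] at h; split_ifs at h <;> omega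

lemma K2_inj (hn : ∀ v, ι v < n) (hinj : Function.Injective ι) :
    Function.Injective (K2 n ι χ) := by
  intro v w h
  have hv := hn v; have hw := hn w
  apply hinj
  simp only [K2] at h; split_ifs at h <;> omega

lemma KM_inj (hn : ∀ v, ι v < n) (hinj : Function.Injective ι) :
    Function.Injective (KM n ι χ) := by
  intro v w h
  have hv := hn v; have hw := hn w
  apply hinj
  simp only [KM] at h; split_ifs at h <;> omega

lemma dv_K1_inj (hn : ∀ v, ι v < n) (hinj : Function.Injective ι)
    (m : ℕ) (hm : m = 4*n ∨ m = 8*n) (hn1 : 1 ≤ n) (u w : V) :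
    Function.Injective (dv (K1 n ι χ) m u w) := by
  intro a b h
  have hK4a : K1 n ι χ a % 4 = 0 := by simp only [K1]; split_ifs <;> omega
  have hK4b : K1 n ι χ b % 4 = 0 := by simp only [K1]; split_ifs <;> omega
  rcases hm with rfl | rfl <;>
    (simp only [dv] at h;
     split_ifs at h <;>
       first
       | (subst_vars; rfl)
       | (exfalso; omega)
       | (exact K1_inj hn hinj h))

lemma dv_K2_inj (hn : ∀ v, ι v < n) (hinj : Function.Injective ι)
    (m : ℕ) (hm : m = 4*n ∨ m = 8*n) (hn1 : 1 ≤ n) (u w : V) :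
    Function.Injective (dv (K2 n ι χ) m u w) := by
  intro a b h
  have hK4a : K2 n ι χ a % 4 = 0 := by simp only [K2]; split_ifs <;> omega
  have hK4b : K2 n ι χ b % 4 = 0 := by simp only [K2]; split_ifs <;> omega
  rcases hm with rfl | rfl <;>
    (simp only [dv] at h;
     split_ifs at h <;>
       first
       | (subst_vars; rfl)
       | (exfalso; omega)
       | (exact K2_inj hn hinj h))

lemma dAB_inj (hn : ∀ v, ι v < n) (hinj : Function.Injective ι) (hn1 : 1 ≤ n) (p : V × V) :
    Function.Injective (dAB n ι χ Eb p) := by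
  simp only [dAB]; split_ifs
  · exact dv_K1_inj hn hinj _ (Or.inl rfl) hn1 _ _
  · exact K1_inj hn hinj

lemma dAC_inj (hn : ∀ v, ι v < n) (hinj : Function.Injective ι) (hn1 : 1 ≤ n) (p : V × V) :
    Function.Injective (dAC n ι χ Eb p) := by
  simp only [dAC]; split_ifs
  · exact dv_K1_inj hn hinj _ (Or.inr rfl) hn1 _ _
  · exact K1_inj hn hinj

lemma dSW_inj (hn : ∀ v, ι v < n) (hinj : Function.Injective ι) (p : V × V) :
    Function.Injective (dSW n ι χ p) := by
  simp only [dSW]; split_ifs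
  · exact fun a b h => (Equiv.swap p.1 p.2).injective (K1_inj hn hinj h)
  · exact K1_inj hn hinj

lemma dBC_inj (hn : ∀ v, ι v < n) (hinj : Function.Injective ι) (hn1 : 1 ≤ n) (p : V × V) :
    Function.Injective (dBC n ι χ Eb p) := by
  simp only [dBC]; split_ifs
  · exact dv_K2_inj hn hinj _ (Or.inr rfl) hn1 _ _
  · exact K2_inj hn hinj

end Facts


open List

variable {V : Type*} [DecidableEq V] [Fintype V]
variable {n : ℕ} {ι : V → ℕ} {χ : V → Fin 3} {Eb : V → V → Bool}

/- ---- order lemmas: a has χ=0, b has χ=1, c has χ=2 ---- -/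

lemma K1_01 {a b : V} (h3 : ι a < n) (h4 : ι b < n) (ha : χ a = 0) (hb : χ b = 1) :
    K1 n ι χ b < K1 n ι χ a := by
  simp [K1, ha, hb]; omega

lemma K1_02 {a c : V} (h3 : ι a < n) (h4 : ι c < n) (ha : χ a = 0) (hc : χ c = 2) :
    K1 n ι χ a < K1 n ι χ c := by
  simp [K1, ha, hc]; omega

lemma K1_12 {b c : V} (h3 : ι b < n) (h4 : ι c < n) (hb : χ b = 1) (hc : χ c = 2) :
    K1 n ι χ b < K1 n ι χ c := by
  simp [K1, hb, hc]; omega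

lemma K2_01 {a b : V} (h3 : ι a < n) (h4 : ι b < n) (ha : χ a = 0) (hb : χ b = 1) :
    K2 n ι χ a < K2 n ι χ b := by
  simp [K2, ha, hb]; omega

lemma K2_02 {a c : V} (h3 : ι a < n) (h4 : ι c < n) (ha : χ a = 0) (hc : χ c = 2) :
    K2 n ι χ a < K2 n ι χ c := by
  simp [K2, ha, hc]; omega

lemma K2_12 {b c : V} (h3 : ι b < n) (h4 : ι c < n) (hb : χ b = 1) (hc : χ c = 2) :
    K2 n ι χ c < K2 n ι χ b := by
  simp [K2, hb, hc]; omega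

lemma dAB_01 {p : V × V} (h1 : ι p.1 < n) (h2 : ι p.2 < n) {a b : V} (h3 : ι a < n) (h4 : ι b < n)
    (ha : χ a = 0) (hb : χ b = 1)
    (hov : ¬(a = p.1 ∧ b = p.2 ∧ Eb p.1 p.2 = false)) :
    dAB n ι χ Eb p b < dAB n ι χ Eb p a := by
  simp only [dAB]
  split_ifs with hc
  · obtain ⟨hc1, hc2, hc3, hc4⟩ := hc
    simp only [dv]
    split_ifs <;> first | omega | (simp_all [K1]; omega) | (simp_all [K1])
  · exact K1_01 h3 h4 ha hb

lemma dAB_02 {p : V × V} (h1 : ι p.1 < n) (h2 : ι p.2 < n) {a c : V} (h3 : ι a < n) (h4 : ι c < n) (ha : χ a = 0) (hc : χ c = 2) :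
    dAB n ι χ Eb p a < dAB n ι χ Eb p c := by
  simp only [dAB]
  split_ifs with hcc
  · obtain ⟨hc1, hc2, hc3, hc4⟩ := hcc
    simp only [dv]
    split_ifs <;> first | omega | (simp_all [K1]; omega) | (simp_all [K1])
  · exact K1_02 h3 h4 ha hc

lemma dAB_12 {p : V × V} (h1 : ι p.1 < n) (h2 : ι p.2 < n) {b c : V} (h3 : ι b < n) (h4 : ι c < n) (hb : χ b = 1) (hc : χ c = 2) :
    dAB n ι χ Eb p b < dAB n ι χ Eb p c := by
  simp only [dAB]
  split_ifs with hcc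
  · obtain ⟨hc1, hc2, hc3, hc4⟩ := hcc
    simp only [dv]
    split_ifs <;> first | omega | (simp_all [K1]; omega) | (simp_all [K1])
  · exact K1_12 h3 h4 hb hc

lemma dAB_dev {a b : V} (h3 : ι a < n) (ha : χ a = 0) (hb : χ b = 1)
    (hE : Eb a b = false) (hab : a ≠ b) :
    dAB n ι χ Eb (a, b) a < dAB n ι χ Eb (a, b) b := by
  simp [dAB, ha, hb, hE, hab, hab.symm, dv]
  omega

lemma dAC_01 {p : V × V} (h1 : ι p.1 < n) (h2 : ι p.2 < n) {a b : V} (h3 : ι a < n) (h4 : ι b < n) (ha : χ a = 0) (hb : χ b = 1) :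
    dAC n ι χ Eb p b < dAC n ι χ Eb p a := by
  simp only [dAC]
  split_ifs with hcc
  · obtain ⟨hc1, hc2, hc3, hc4⟩ := hcc
    simp only [dv]
    split_ifs <;> first | omega | (simp_all [K1]; omega) | (simp_all [K1])
  · exact K1_01 h3 h4 ha hb

lemma dAC_02 {p : V × V} (h1 : ι p.1 < n) (h2 : ι p.2 < n) {a c : V} (h3 : ι a < n) (h4 : ι c < n)
    (ha : χ a = 0) (hc : χ c = 2)
    (hov : ¬(a = p.1 ∧ c = p.2 ∧ Eb p.1 p.2 = false)) :
    dAC n ι χ Eb p a < dAC n ι χ Eb p c := by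
  simp only [dAC]
  split_ifs with hcc
  · obtain ⟨hc1, hc2, hc3, hc4⟩ := hcc
    simp only [dv]
    split_ifs <;> first | omega | (simp_all [K1]; omega) | (simp_all [K1])
  · exact K1_02 h3 h4 ha hc

lemma dAC_12 {p : V × V} (h1 : ι p.1 < n) (h2 : ι p.2 < n) {b c : V} (h3 : ι b < n) (h4 : ι c < n) (hb : χ b = 1) (hc : χ c = 2) :
    dAC n ι χ Eb p b < dAC n ι χ Eb p c := by
  simp only [dAC]
  split_ifs with hcc
  · obtain ⟨hc1, hc2, hc3, hc4⟩ := hcc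
    simp only [dv]
    split_ifs <;> first | omega | (simp_all [K1]; omega) | (simp_all [K1])
  · exact K1_12 h3 h4 hb hc

lemma dAC_dev {a c : V} (h3 : ι a < n) (ha : χ a = 0) (hc : χ c = 2)
    (hE : Eb a c = false) (hac : a ≠ c) :
    dAC n ι χ Eb (a, c) c < dAC n ι χ Eb (a, c) a := by
  simp [dAC, ha, hc, hE, hac, dv, Ne.symm hac]
  omega

lemma dSW_01 {p : V × V} (h1 : ι p.1 < n) (h2 : ι p.2 < n) {a b : V} (h3 : ι a < n) (h4 : ι b < n) (ha : χ a = 0) (hb : χ b = 1) :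
    dSW n ι χ p b < dSW n ι χ p a := by
  simp only [dSW]
  split_ifs with hcc
  · obtain ⟨hc1, hc2⟩ := hcc
    simp only [sw, Equiv.swap_apply_def]
    split_ifs <;> (apply K1_01 (by assumption) (by assumption)) <;> simp_all
  · exact K1_01 h3 h4 ha hb

lemma dSW_02 {p : V × V} (h1 : ι p.1 < n) (h2 : ι p.2 < n) {a c : V} (h3 : ι a < n) (h4 : ι c < n) (ha : χ a = 0) (hc : χ c = 2) :
    dSW n ι χ p a < dSW n ι χ p c := by
  simp only [dSW]
  split_ifs with hcc
  · obtain ⟨hc1, hc2⟩ := hcc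
    simp only [sw, Equiv.swap_apply_def]
    split_ifs <;> (apply K1_02 (by assumption) (by assumption)) <;> simp_all
  · exact K1_02 h3 h4 ha hc

lemma dSW_12 {p : V × V} (h1 : ι p.1 < n) (h2 : ι p.2 < n) {b c : V} (h3 : ι b < n) (h4 : ι c < n) (hb : χ b = 1) (hc : χ c = 2) :
    dSW n ι χ p b < dSW n ι χ p c := by
  simp only [dSW]
  split_ifs with hcc
  · obtain ⟨hc1, hc2⟩ := hcc
    simp only [sw, Equiv.swap_apply_def]
    split_ifs <;> (apply K1_12 (by assumption) (by assumption)) <;> simp_all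
  · exact K1_12 h3 h4 hb hc

lemma dSW_swap {x y : V} (hc : χ x = χ y) (hxy : x ≠ y) :
    dSW n ι χ (x, y) x = K1 n ι χ y ∧ dSW n ι χ (x, y) y = K1 n ι χ x := by
  simp [dSW, hc, hxy, sw]

lemma dBC_01 {p : V × V} (h1 : ι p.1 < n) (h2 : ι p.2 < n) {a b : V} (h3 : ι a < n) (h4 : ι b < n) (ha : χ a = 0) (hb : χ b = 1) :
    dBC n ι χ Eb p a < dBC n ι χ Eb p b := by
  simp only [dBC]
  split_ifs with hcc
  · obtain ⟨hc1, hc2, hc3, hc4⟩ := hcc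
    simp only [dv]
    split_ifs <;> first | omega | (simp_all [K2]; omega) | (simp_all [K2])
  · exact K2_01 h3 h4 ha hb

lemma dBC_02 {p : V × V} (h1 : ι p.1 < n) (h2 : ι p.2 < n) {a c : V} (h3 : ι a < n) (h4 : ι c < n) (ha : χ a = 0) (hc : χ c = 2) :
    dBC n ι χ Eb p a < dBC n ι χ Eb p c := by
  simp only [dBC]
  split_ifs with hcc
  · obtain ⟨hc1, hc2, hc3, hc4⟩ := hcc
    simp only [dv]
    split_ifs <;> first | omega | (simp_all [K2]; omega) | (simp_all [K2])
  · exact K2_02 h3 h4 ha hc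

lemma dBC_12 {p : V × V} (h1 : ι p.1 < n) (h2 : ι p.2 < n) {b c : V} (h3 : ι b < n) (h4 : ι c < n)
    (hb : χ b = 1) (hc : χ c = 2)
    (hov : ¬(b = p.1 ∧ c = p.2 ∧ Eb p.1 p.2 = false)) :
    dBC n ι χ Eb p c < dBC n ι χ Eb p b := by
  simp only [dBC]
  split_ifs with hcc
  · obtain ⟨hc1, hc2, hc3, hc4⟩ := hcc
    simp only [dv]
    split_ifs <;> first | omega | (simp_all [K2]; omega) | (simp_all [K2])
  · exact K2_12 h3 h4 hb hc

lemma dBC_dev {b c : V} (h3 : ι b < n) (hb : χ b = 1) (hc : χ c = 2)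
    (hE : Eb b c = false) (hbc : b ≠ c) :
    dBC n ι χ Eb (b, c) b < dBC n ι χ Eb (b, c) c := by
  simp [dBC, hb, hc, hE, hbc, hbc.symm, dv]
  omega

lemma KM_1 {v : V} (hv : χ v = 1) : KM n ι χ v = 4 * ι v := by simp [KM, hv]

lemma KM_not1 {v : V} (hv : χ v ≠ 1) : KM n ι χ v = 12 * n + ι v := by simp [KM, hv]



open List

variable {V : Type*} [DecidableEq V] [Fintype V]
variable {n : ℕ} {ι : V → ℕ} {χ : V → Fin 3} {Eb : V → V → Bool}

lemma filter_blk {N : ℕ} {k : V → ℕ} {x y : V} (hxy : x ≠ y) (hk : k x ≠ k y) :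
    (blk N k).filter (fun z => decide (z = x ∨ z = y)) =
      if k x < N then (if k y < N then (if k x < k y then [x, y] else [y, x]) else [x])
      else if k y < N then [y] else [] := by
  unfold blk
  rw [List.filter_flatten, List.map_map]
  have hcong : (List.range N).map ((fun l => List.filter (fun z => decide (z = x ∨ z = y)) l) ∘
        (fun m => (Finset.univ.filter (fun v => k v = m)).toList)) =
      (List.range N).map (fun m => if m = k x then [x] else if m = k y then [y] else []) :=
    List.map_congr_left (fun m _ => bucket_filter hxy hk m)
  rw [hcong]
  exact flatten_range_two x y N (k x) (k y) hk

section Tok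
variable {N : ℕ} {k : V → ℕ} {x y : V}

lemma tk_pair (hxy : x ≠ y) (hx : k x < N) (hy : k y < N) (hlt : k x < k y) :
    (blk N k).filter (fun z => decide (z = x ∨ z = y)) = [x, y] := by
  rw [filter_blk hxy hlt.ne, if_pos hx, if_pos hy, if_pos hlt]

lemma tk_pair' (hxy : x ≠ y) (hx : k x < N) (hy : k y < N) (hlt : k y < k x) :
    (blk N k).filter (fun z => decide (z = x ∨ z = y)) = [y, x] := by
  rw [filter_blk hxy hlt.ne', if_pos hx, if_pos hy, if_neg (by omega)]

lemma tk_right (hxy : x ≠ y) (hx : ¬ k x < N) (hy : k y < N) (hk : k x ≠ k y) :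
    (blk N k).filter (fun z => decide (z = x ∨ z = y)) = [y] := by
  rw [filter_blk hxy hk, if_neg hx, if_pos hy]

lemma tk_left (hxy : x ≠ y) (hx : k x < N) (hy : ¬ k y < N) (hk : k x ≠ k y) :
    (blk N k).filter (fun z => decide (z = x ∨ z = y)) = [x] := by
  rw [filter_blk hxy hk, if_pos hx, if_neg hy]

lemma tk_none (hxy : x ≠ y) (hx : ¬ k x < N) (hy : ¬ k y < N) (hk : k x ≠ k y) :
    (blk N k).filter (fun z => decide (z = x ∨ z = y)) = [] := by
  rw [filter_blk hxy hk, if_neg hx, if_neg hy]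

lemma tk_mem (hxy : x ≠ y) (hx : k x < N) (hy : k y < N) (hk : k x ≠ k y) :
    (blk N k).filter (fun z => decide (z = x ∨ z = y)) = [x, y] ∨
    (blk N k).filter (fun z => decide (z = x ∨ z = y)) = [y, x] := by
  rcases lt_or_gt_of_ne hk with h | h
  · exact Or.inl (tk_pair hxy hx hy h)
  · exact Or.inr (tk_pair' hxy hx hy h)

end Tok

noncomputable def pairsL (V : Type*) [Fintype V] : List (V × V) :=
  (Finset.univ : Finset (V × V)).toList

noncomputable def lam1 (n : ℕ) (ι : V → ℕ) (χ : V → Fin 3) (Eb : V → V → Bool) :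
    List (V → ℕ) :=
  K1 n ι χ :: ((pairsL V).map (dAB n ι χ Eb) ++ (pairsL V).map (dAC n ι χ Eb) ++
    (pairsL V).map (dSW n ι χ))

noncomputable def lam2 (n : ℕ) (ι : V → ℕ) (χ : V → Fin 3) (Eb : V → V → Bool) :
    List (V → ℕ) :=
  K2 n ι χ :: (pairsL V).map (dBC n ι χ Eb)

noncomputable def word (n : ℕ) (ι : V → ℕ) (χ : V → Fin 3) (Eb : V → V → Bool) : List V :=
  ((lam1 n ι χ Eb ++ [KM n ι χ] ++ lam2 n ι χ Eb).map (blk (12*n))).flatten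

lemma mem_word (hn : ∀ v, ι v < n) (v : V) : v ∈ word n ι χ Eb := by
  unfold word
  rw [List.mem_flatten]
  refine ⟨blk (12*n) (K1 n ι χ), List.mem_map.mpr ⟨K1 n ι χ, ?_, rfl⟩, mem_blk (K1_lt hn v)⟩
  simp [lam1]

lemma word_filter (x y : V) :
    (word n ι χ Eb).filter (fun z => decide (z = x ∨ z = y)) =
      ((lam1 n ι χ Eb ++ [KM n ι χ] ++ lam2 n ι χ Eb).map
        (fun kk => (blk (12*n) kk).filter (fun z => decide (z = x ∨ z = y)))).flatten := by
  unfold word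
  rw [List.filter_flatten, List.map_map]
  rfl



open List

variable {V : Type*} [DecidableEq V] [Fintype V]
variable {n : ℕ} {ι : V → ℕ} {χ : V → Fin 3} {Eb : V → V → Bool}

lemma head_flatten_all {α : Type*} {u v : α} {l : List (List α)} (h : ∀ s ∈ l, s = [u, v]) :
    ∀ a ∈ l.flatten.head?, a = u := by
  have := head_mem_flatten_eq h (r := []) (by simp)
  simpa using this

/-- destructure membership in a doubly-mapped list -/
lemma mem_map_map {α β γ : Type*} {s : γ} {f : β → γ} {g : α → β} {l : List α}
    (hs : s ∈ (l.map g).map f) : ∃ p ∈ l, s = f (g p) := by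
  rcases List.mem_map.mp hs with ⟨kk, hkk, rfl⟩
  rcases List.mem_map.mp hkk with ⟨p, hp, rfl⟩
  exact ⟨p, hp, rfl⟩

lemma core01 (hn : ∀ v, ι v < n) (hinj : Function.Injective ι)
    {x y : V} (hxy : x ≠ y) (hx : χ x = 0) (hy : χ y = 1) :
    (Eb x y = true ↔
      ((word n ι χ Eb).filter (fun z => decide (z = x ∨ z = y))).Chain' (· ≠ ·)) := by
  set F : (V → ℕ) → List V :=
    fun kk => (blk (12*n) kk).filter (fun z => decide (z = x ∨ z = y)) with hF
  have hKM : F (KM n ι χ) = [y] := by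
    refine tk_right hxy ?_ ?_ ?_
    · rw [KM_not1 (by simp [hx])]; omega
    · rw [KM_1 hy]; have := hn y; omega
    · exact fun h => hxy (KM_inj hn hinj h)
  have t2 : ∀ s ∈ (lam2 n ι χ Eb).map F, s = [x, y] := by
    intro s hs
    rw [lam2, List.map_cons] at hs
    rcases List.mem_cons.mp hs with rfl | hs
    · exact tk_pair hxy (K2_lt hn x) (K2_lt hn y) (K2_01 (hn x) (hn y) hx hy)
    · obtain ⟨p, _, rfl⟩ := mem_map_map hs
      exact tk_pair hxy (dBC_lt hn p x) (dBC_lt hn p y)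
        (dBC_01 (hn p.1) (hn p.2) (hn x) (hn y) hx hy)
  rcases hE : Eb x y with _ | _
  · -- non-adjacent: show the word does not alternate
    refine iff_of_false (by simp) ?_
    have hmem : (x, y) ∈ pairsL V := by simp [pairsL]
    obtain ⟨l1, l2, hsplit⟩ := List.append_of_mem hmem
    have hnotmem : (x, y) ∉ l1 := by
      have hnd : (pairsL V).Nodup := Finset.nodup_toList _
      rw [hsplit] at hnd
      intro hc
      exact (List.nodup_append'.mp hnd).2.2 hc List.mem_cons_self
    have hpre : ∀ s ∈ (K1 n ι χ :: l1.map (dAB n ι χ Eb)).map F, s = [y, x] := by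
      intro s hs
      rw [List.map_cons] at hs
      rcases List.mem_cons.mp hs with rfl | hs
      · exact tk_pair' hxy (K1_lt hn x) (K1_lt hn y) (K1_01 (hn x) (hn y) hx hy)
      · obtain ⟨p, hp, rfl⟩ := mem_map_map hs
        refine tk_pair' hxy (dAB_lt hn p x) (dAB_lt hn p y)
          (dAB_01 (hn p.1) (hn p.2) (hn x) (hn y) hx hy ?_)
        rintro ⟨h1, h2, _⟩
        have hpxy : p = (x, y) := by
          rcases p with ⟨p1, p2⟩
          simp_all
        exact hnotmem (hpxy ▸ hp)
    have hdev : F (dAB n ι χ Eb (x, y)) = [x, y] :=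
      tk_pair hxy (dAB_lt hn _ x) (dAB_lt hn _ y) (dAB_dev (hn x) hx hy hE hxy)
    obtain ⟨W, hW⟩ := flatten_ends hpre (by simp)
    have hw : (word n ι χ Eb).filter (fun z => decide (z = x ∨ z = y)) =
        ((K1 n ι χ :: l1.map (dAB n ι χ Eb)).map F).flatten ++
        (x :: y ::
          (((l2.map (dAB n ι χ Eb)).map F).flatten ++
           (((pairsL V).map (dAC n ι χ Eb)).map F).flatten ++
           (((pairsL V).map (dSW n ι χ)).map F).flatten ++
           F (KM n ι χ) ++
           ((lam2 n ι χ Eb).map F).flatten)) := by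
      rw [word_filter, lam1, hsplit]
      simp only [List.map_append, List.map_cons, List.map_nil, List.flatten_append,
        List.flatten_cons, List.flatten_nil, List.append_assoc, List.cons_append,
        List.nil_append, List.append_nil, hdev, ← hF]
    rw [hw, hW]
    have heq : (W ++ [x]) ++ (x :: y ::
        (((l2.map (dAB n ι χ Eb)).map F).flatten ++
         (((pairsL V).map (dAC n ι χ Eb)).map F).flatten ++
         (((pairsL V).map (dSW n ι χ)).map F).flatten ++
         F (KM n ι χ) ++
         ((lam2 n ι χ Eb).map F).flatten)) =
        W ++ (x :: x :: (y ::
        (((l2.map (dAB n ι χ Eb)).map F).flatten ++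
         (((pairsL V).map (dAC n ι χ Eb)).map F).flatten ++
         (((pairsL V).map (dSW n ι χ)).map F).flatten ++
         F (KM n ι χ) ++
         ((lam2 n ι χ Eb).map F).flatten))) := by
      simp
    rw [heq]
    exact not_chain'_dup _ _ _
  · -- adjacent: show the word alternates
    refine iff_of_true rfl ?_
    have t1 : ∀ s ∈ (lam1 n ι χ Eb).map F, s = [y, x] := by
      intro s hs
      rw [lam1, List.map_cons] at hs
      rcases List.mem_cons.mp hs with rfl | hs
      · exact tk_pair' hxy (K1_lt hn x) (K1_lt hn y) (K1_01 (hn x) (hn y) hx hy)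
      · rw [List.map_append, List.map_append] at hs
        rcases List.mem_append.mp hs with hs | hs
        · rcases List.mem_append.mp hs with hs | hs
          · obtain ⟨p, hp, rfl⟩ := mem_map_map hs
            refine tk_pair' hxy (dAB_lt hn p x) (dAB_lt hn p y)
              (dAB_01 (hn p.1) (hn p.2) (hn x) (hn y) hx hy ?_)
            rintro ⟨h1, h2, h3⟩
            rw [← h1, ← h2, hE] at h3
            simp at h3
          · obtain ⟨p, hp, rfl⟩ := mem_map_map hs
            exact tk_pair' hxy (dAC_lt hn p x) (dAC_lt hn p y)
              (dAC_01 (hn p.1) (hn p.2) (hn x) (hn y) hx hy)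
        · obtain ⟨p, hp, rfl⟩ := mem_map_map hs
          exact tk_pair' hxy (dSW_lt hn p x) (dSW_lt hn p y)
            (dSW_01 (hn p.1) (hn p.2) (hn x) (hn y) hx hy)
    have hw : (word n ι χ Eb).filter (fun z => decide (z = x ∨ z = y)) =
        ((lam1 n ι χ Eb).map F).flatten ++
        (y :: ((lam2 n ι χ Eb).map F).flatten) := by
      rw [word_filter]
      simp only [List.map_append, List.map_cons, List.map_nil, List.flatten_append,
        List.flatten_cons, List.flatten_nil, List.append_assoc, List.cons_append,
        List.nil_append, List.append_nil, hKM, ← hF]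
    rw [hw]
    refine chain'_flatten_alt (Ne.symm hxy) _ _ t1 ?_ (by simp)
    refine List.isChain_cons.mpr ⟨?_, ?_⟩
    · intro a ha
      have := head_flatten_all t2 a ha
      subst this
      exact Ne.symm hxy
    · have := chain'_flatten_alt hxy ((lam2 n ι χ Eb).map F) [] t2 List.isChain_nil (by simp)
      simpa [List.Chain'] using this



open List

variable {V : Type*} [DecidableEq V] [Fintype V]
variable {n : ℕ} {ι : V → ℕ} {χ : V → Fin 3} {Eb : V → V → Bool}

lemma core02 (hn : ∀ v, ι v < n) (hinj : Function.Injective ι)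
    {x y : V} (hxy : x ≠ y) (hx : χ x = 0) (hy : χ y = 2) :
    (Eb x y = true ↔
      ((word n ι χ Eb).filter (fun z => decide (z = x ∨ z = y))).Chain' (· ≠ ·)) := by
  set F : (V → ℕ) → List V :=
    fun kk => (blk (12*n) kk).filter (fun z => decide (z = x ∨ z = y)) with hF
  have hKM : F (KM n ι χ) = [] := by
    refine tk_none hxy ?_ ?_ ?_
    · rw [KM_not1 (by simp [hx])]; omega
    · rw [KM_not1 (by simp [hy])]; omega
    · exact fun h => hxy (KM_inj hn hinj h)
  have t2 : ∀ s ∈ (lam2 n ι χ Eb).map F, s = [x, y] := by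
    intro s hs
    rw [lam2, List.map_cons] at hs
    rcases List.mem_cons.mp hs with rfl | hs
    · exact tk_pair hxy (K2_lt hn x) (K2_lt hn y) (K2_02 (hn x) (hn y) hx hy)
    · obtain ⟨p, _, rfl⟩ := mem_map_map hs
      exact tk_pair hxy (dBC_lt hn p x) (dBC_lt hn p y)
        (dBC_02 (hn p.1) (hn p.2) (hn x) (hn y) hx hy)
  rcases hE : Eb x y with _ | _
  · refine iff_of_false (by simp) ?_
    have hmem : (x, y) ∈ pairsL V := by simp [pairsL]
    obtain ⟨l1, l2, hsplit⟩ := List.append_of_mem hmem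
    have hnotmem : (x, y) ∉ l1 := by
      have hnd : (pairsL V).Nodup := Finset.nodup_toList _
      rw [hsplit] at hnd
      intro hc
      exact (List.nodup_append'.mp hnd).2.2 hc List.mem_cons_self
    have hpre : ∀ s ∈ (K1 n ι χ :: ((pairsL V).map (dAB n ι χ Eb) ++
        l1.map (dAC n ι χ Eb))).map F, s = [x, y] := by
      intro s hs
      rw [List.map_cons] at hs
      rcases List.mem_cons.mp hs with rfl | hs
      · exact tk_pair hxy (K1_lt hn x) (K1_lt hn y) (K1_02 (hn x) (hn y) hx hy)
      · rw [List.map_append] at hs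
        rcases List.mem_append.mp hs with hs | hs
        · obtain ⟨p, hp, rfl⟩ := mem_map_map hs
          exact tk_pair hxy (dAB_lt hn p x) (dAB_lt hn p y)
            (dAB_02 (hn p.1) (hn p.2) (hn x) (hn y) hx hy)
        · obtain ⟨p, hp, rfl⟩ := mem_map_map hs
          refine tk_pair hxy (dAC_lt hn p x) (dAC_lt hn p y)
            (dAC_02 (hn p.1) (hn p.2) (hn x) (hn y) hx hy ?_)
          rintro ⟨h1, h2, _⟩
          have hpxy : p = (x, y) := by
            rcases p with ⟨p1, p2⟩
            simp_all
          exact hnotmem (hpxy ▸ hp)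
    have hdev : F (dAC n ι χ Eb (x, y)) = [y, x] :=
      tk_pair' hxy (dAC_lt hn _ x) (dAC_lt hn _ y) (dAC_dev (hn x) hx hy hE hxy)
    obtain ⟨W, hW⟩ := flatten_ends hpre (by simp)
    have hw : (word n ι χ Eb).filter (fun z => decide (z = x ∨ z = y)) =
        ((K1 n ι χ :: ((pairsL V).map (dAB n ι χ Eb) ++ l1.map (dAC n ι χ Eb))).map F).flatten ++
        (y :: x ::
          (((l2.map (dAC n ι χ Eb)).map F).flatten ++
           (((pairsL V).map (dSW n ι χ)).map F).flatten ++
           F (KM n ι χ) ++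
           ((lam2 n ι χ Eb).map F).flatten)) := by
      rw [word_filter, lam1, hsplit]
      simp only [List.map_append, List.map_cons, List.map_nil, List.flatten_append,
        List.flatten_cons, List.flatten_nil, List.append_assoc, List.cons_append,
        List.nil_append, List.append_nil, hdev, ← hF]
    rw [hw, hW]
    have heq : (W ++ [y]) ++ (y :: x ::
        (((l2.map (dAC n ι χ Eb)).map F).flatten ++
         (((pairsL V).map (dSW n ι χ)).map F).flatten ++
         F (KM n ι χ) ++
         ((lam2 n ι χ Eb).map F).flatten)) =
        W ++ (y :: y :: (x ::
        (((l2.map (dAC n ι χ Eb)).map F).flatten ++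
         (((pairsL V).map (dSW n ι χ)).map F).flatten ++
         F (KM n ι χ) ++
         ((lam2 n ι χ Eb).map F).flatten))) := by
      simp
    rw [heq]
    exact not_chain'_dup _ _ _
  · refine iff_of_true rfl ?_
    have t1 : ∀ s ∈ (lam1 n ι χ Eb).map F, s = [x, y] := by
      intro s hs
      rw [lam1, List.map_cons] at hs
      rcases List.mem_cons.mp hs with rfl | hs
      · exact tk_pair hxy (K1_lt hn x) (K1_lt hn y) (K1_02 (hn x) (hn y) hx hy)
      · rw [List.map_append, List.map_append] at hs
        rcases List.mem_append.mp hs with hs | hs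
        · rcases List.mem_append.mp hs with hs | hs
          · obtain ⟨p, hp, rfl⟩ := mem_map_map hs
            exact tk_pair hxy (dAB_lt hn p x) (dAB_lt hn p y)
              (dAB_02 (hn p.1) (hn p.2) (hn x) (hn y) hx hy)
          · obtain ⟨p, hp, rfl⟩ := mem_map_map hs
            refine tk_pair hxy (dAC_lt hn p x) (dAC_lt hn p y)
              (dAC_02 (hn p.1) (hn p.2) (hn x) (hn y) hx hy ?_)
            rintro ⟨h1, h2, h3⟩
            rw [← h1, ← h2, hE] at h3
            simp at h3
        · obtain ⟨p, hp, rfl⟩ := mem_map_map hs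
          exact tk_pair hxy (dSW_lt hn p x) (dSW_lt hn p y)
            (dSW_02 (hn p.1) (hn p.2) (hn x) (hn y) hx hy)
    have hw : (word n ι χ Eb).filter (fun z => decide (z = x ∨ z = y)) =
        ((lam1 n ι χ Eb).map F).flatten ++ ((lam2 n ι χ Eb).map F).flatten := by
      rw [word_filter]
      simp only [List.map_append, List.map_cons, List.map_nil, List.flatten_append,
        List.flatten_cons, List.flatten_nil, List.append_assoc, List.cons_append,
        List.nil_append, List.append_nil, hKM, ← hF]
    rw [hw]
    refine chain'_flatten_alt hxy _ _ t1 ?_ ?_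
    · have := chain'_flatten_alt hxy ((lam2 n ι χ Eb).map F) [] t2 List.isChain_nil (by simp)
      simpa [List.Chain'] using this
    · exact head_flatten_all t2

lemma core12 (hn : ∀ v, ι v < n) (hinj : Function.Injective ι)
    {x y : V} (hxy : x ≠ y) (hx : χ x = 1) (hy : χ y = 2) :
    (Eb x y = true ↔
      ((word n ι χ Eb).filter (fun z => decide (z = x ∨ z = y))).Chain' (· ≠ ·)) := by
  set F : (V → ℕ) → List V :=
    fun kk => (blk (12*n) kk).filter (fun z => decide (z = x ∨ z = y)) with hF
  have hKM : F (KM n ι χ) = [x] := by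
    refine tk_left hxy ?_ ?_ ?_
    · rw [KM_1 hx]; have := hn x; omega
    · rw [KM_not1 (by simp [hy])]; omega
    · exact fun h => hxy (KM_inj hn hinj h)
  have t1 : ∀ s ∈ (lam1 n ι χ Eb).map F, s = [x, y] := by
    intro s hs
    rw [lam1, List.map_cons] at hs
    rcases List.mem_cons.mp hs with rfl | hs
    · exact tk_pair hxy (K1_lt hn x) (K1_lt hn y) (K1_12 (hn x) (hn y) hx hy)
    · rw [List.map_append, List.map_append] at hs
      rcases List.mem_append.mp hs with hs | hs
      · rcases List.mem_append.mp hs with hs | hs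
        · obtain ⟨p, hp, rfl⟩ := mem_map_map hs
          exact tk_pair hxy (dAB_lt hn p x) (dAB_lt hn p y)
            (dAB_12 (hn p.1) (hn p.2) (hn x) (hn y) hx hy)
        · obtain ⟨p, hp, rfl⟩ := mem_map_map hs
          exact tk_pair hxy (dAC_lt hn p x) (dAC_lt hn p y)
            (dAC_12 (hn p.1) (hn p.2) (hn x) (hn y) hx hy)
      · obtain ⟨p, hp, rfl⟩ := mem_map_map hs
        exact tk_pair hxy (dSW_lt hn p x) (dSW_lt hn p y)
          (dSW_12 (hn p.1) (hn p.2) (hn x) (hn y) hx hy)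
  rcases hE : Eb x y with _ | _
  · refine iff_of_false (by simp) ?_
    have hmem : (x, y) ∈ pairsL V := by simp [pairsL]
    obtain ⟨l1, l2, hsplit⟩ := List.append_of_mem hmem
    have hnotmem : (x, y) ∉ l1 := by
      have hnd : (pairsL V).Nodup := Finset.nodup_toList _
      rw [hsplit] at hnd
      intro hc
      exact (List.nodup_append'.mp hnd).2.2 hc List.mem_cons_self
    have hpre : ∀ s ∈ (K2 n ι χ :: l1.map (dBC n ι χ Eb)).map F, s = [y, x] := by
      intro s hs
      rw [List.map_cons] at hs
      rcases List.mem_cons.mp hs with rfl | hs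
      · exact tk_pair' hxy (K2_lt hn x) (K2_lt hn y) (K2_12 (hn x) (hn y) hx hy)
      · obtain ⟨p, hp, rfl⟩ := mem_map_map hs
        refine tk_pair' hxy (dBC_lt hn p x) (dBC_lt hn p y)
          (dBC_12 (hn p.1) (hn p.2) (hn x) (hn y) hx hy ?_)
        rintro ⟨h1, h2, _⟩
        have hpxy : p = (x, y) := by
          rcases p with ⟨p1, p2⟩
          simp_all
        exact hnotmem (hpxy ▸ hp)
    have hdev : F (dBC n ι χ Eb (x, y)) = [x, y] :=
      tk_pair hxy (dBC_lt hn _ x) (dBC_lt hn _ y) (dBC_dev (hn x) hx hy hE hxy)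
    obtain ⟨W, hW⟩ := flatten_ends hpre (by simp)
    have hw : (word n ι χ Eb).filter (fun z => decide (z = x ∨ z = y)) =
        (((lam1 n ι χ Eb).map F).flatten ++ (x :: [])) ++
        (((K2 n ι χ :: l1.map (dBC n ι χ Eb)).map F).flatten ++
          (x :: y :: ((l2.map (dBC n ι χ Eb)).map F).flatten)) := by
      rw [word_filter, lam2, hsplit]
      simp only [List.map_append, List.map_cons, List.map_nil, List.flatten_append,
        List.flatten_cons, List.flatten_nil, List.append_assoc, List.cons_append,
        List.nil_append, List.append_nil, hKM, hdev, ← hF]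
    rw [hw, hW]
    have heq : (((lam1 n ι χ Eb).map F).flatten ++ (x :: [])) ++
        ((W ++ [x]) ++ (x :: y :: ((l2.map (dBC n ι χ Eb)).map F).flatten)) =
        (((lam1 n ι χ Eb).map F).flatten ++ x :: W) ++
        (x :: x :: (y :: ((l2.map (dBC n ι χ Eb)).map F).flatten)) := by
      simp
    rw [heq]
    exact not_chain'_dup _ _ _
  · refine iff_of_true rfl ?_
    have t2 : ∀ s ∈ (lam2 n ι χ Eb).map F, s = [y, x] := by
      intro s hs
      rw [lam2, List.map_cons] at hs
      rcases List.mem_cons.mp hs with rfl | hs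
      · exact tk_pair' hxy (K2_lt hn x) (K2_lt hn y) (K2_12 (hn x) (hn y) hx hy)
      · obtain ⟨p, hp, rfl⟩ := mem_map_map hs
        refine tk_pair' hxy (dBC_lt hn p x) (dBC_lt hn p y)
          (dBC_12 (hn p.1) (hn p.2) (hn x) (hn y) hx hy ?_)
        rintro ⟨h1, h2, h3⟩
        rw [← h1, ← h2, hE] at h3
        simp at h3
    have hw : (word n ι χ Eb).filter (fun z => decide (z = x ∨ z = y)) =
        ((lam1 n ι χ Eb).map F).flatten ++
        (x :: ((lam2 n ι χ Eb).map F).flatten) := by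
      rw [word_filter]
      simp only [List.map_append, List.map_cons, List.map_nil, List.flatten_append,
        List.flatten_cons, List.flatten_nil, List.append_assoc, List.cons_append,
        List.nil_append, List.append_nil, hKM, ← hF]
    rw [hw]
    refine chain'_flatten_alt hxy _ _ t1 ?_ (by simp)
    refine List.isChain_cons.mpr ⟨?_, ?_⟩
    · intro a ha
      have := head_flatten_all t2 a ha
      subst this
      exact hxy
    · have := chain'_flatten_alt (Ne.symm hxy) ((lam2 n ι χ Eb).map F) [] t2
        List.isChain_nil (by simp)
      simpa [List.Chain'] using this

lemma coreSame (hn : ∀ v, ι v < n) (hinj : Function.Injective ι)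
    (hcol : ∀ u v, Eb u v = true → χ u ≠ χ v)
    {x y : V} (hxy : x ≠ y) (hc : χ x = χ y) :
    (Eb x y = true ↔
      ((word n ι χ Eb).filter (fun z => decide (z = x ∨ z = y))).Chain' (· ≠ ·)) := by
  have hn1 : 1 ≤ n := lt_of_le_of_lt (Nat.zero_le _) (hn x)
  set F : (V → ℕ) → List V :=
    fun kk => (blk (12*n) kk).filter (fun z => decide (z = x ∨ z = y)) with hF
  have hEfalse : Eb x y ≠ true := fun h => (hcol x y h) hc
  refine iff_of_false hEfalse ?_
  have hKne : K1 n ι χ x ≠ K1 n ι χ y := fun h => hxy (K1_inj hn hinj h)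
  have tall : ∀ s ∈ (lam1 n ι χ Eb).map F, s = [x, y] ∨ s = [y, x] := by
    intro s hs
    rw [lam1, List.map_cons] at hs
    rcases List.mem_cons.mp hs with rfl | hs
    · exact tk_mem hxy (K1_lt hn x) (K1_lt hn y) hKne
    · rw [List.map_append, List.map_append] at hs
      rcases List.mem_append.mp hs with hs | hs
      · rcases List.mem_append.mp hs with hs | hs
        · obtain ⟨p, hp, rfl⟩ := mem_map_map hs
          exact tk_mem hxy (dAB_lt hn p x) (dAB_lt hn p y)
            (fun h => hxy (dAB_inj hn hinj hn1 p h))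
        · obtain ⟨p, hp, rfl⟩ := mem_map_map hs
          exact tk_mem hxy (dAC_lt hn p x) (dAC_lt hn p y)
            (fun h => hxy (dAC_inj hn hinj hn1 p h))
      · obtain ⟨p, hp, rfl⟩ := mem_map_map hs
        exact tk_mem hxy (dSW_lt hn p x) (dSW_lt hn p y)
          (fun h => hxy (dSW_inj hn hinj p h))
  -- the base block and the swap block give two distinct tokens
  have hswx : dSW n ι χ (x, y) x = K1 n ι χ y := (dSW_swap hc hxy).1
  have hswy : dSW n ι χ (x, y) y = K1 n ι χ x := (dSW_swap hc hxy).2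
  have hmemK1 : F (K1 n ι χ) ∈ (lam1 n ι χ Eb).map F :=
    List.mem_map.mpr ⟨K1 n ι χ, by simp [lam1], rfl⟩
  have hmemSW : F (dSW n ι χ (x, y)) ∈ (lam1 n ι χ Eb).map F := by
    refine List.mem_map.mpr ⟨dSW n ι χ (x, y), ?_, rfl⟩
    simp only [lam1, List.mem_cons, List.mem_append, List.mem_map]
    right; right
    exact ⟨(x, y), by simp [pairsL], rfl⟩
  have hdistinct : F (K1 n ι χ) ≠ F (dSW n ι χ (x, y)) := by
    simp only [hF]
    rcases lt_or_gt_of_ne hKne with h | h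
    · rw [tk_pair hxy (K1_lt hn x) (K1_lt hn y) h,
        tk_pair' hxy (dSW_lt hn _ x) (dSW_lt hn _ y) (by rw [hswx, hswy]; exact h)]
      simp [hxy]
    · rw [tk_pair' hxy (K1_lt hn x) (K1_lt hn y) h,
        tk_pair hxy (dSW_lt hn _ x) (dSW_lt hn _ y) (by rw [hswx, hswy]; exact h)]
      simp [hxy.symm]
  obtain ⟨L1, s, t, L2, hdecomp, hst⟩ :=
    exists_adj_ne ((lam1 n ι χ Eb).map F) ⟨_, hmemK1, _, hmemSW, hdistinct⟩
  have hs' : s = [x, y] ∨ s = [y, x] := tall s (by rw [hdecomp]; simp)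
  have ht' : t = [x, y] ∨ t = [y, x] := tall t (by rw [hdecomp]; simp)
  have hw : (word n ι χ Eb).filter (fun z => decide (z = x ∨ z = y)) =
      ((lam1 n ι χ Eb).map F).flatten ++
      (F (KM n ι χ) ++ ((lam2 n ι χ Eb).map F).flatten) := by
    rw [word_filter]
    simp only [List.map_append, List.map_cons, List.map_nil, List.flatten_append,
      List.flatten_cons, List.flatten_nil, List.append_assoc, List.cons_append,
      List.nil_append, List.append_nil, ← hF]
  rw [hw, hdecomp]
  rcases hs' with rfl | rfl <;> rcases ht' with rfl | rfl
  · exact absurd rfl hst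
  · have := not_chain'_dup (L1.flatten ++ [x])
      (x :: (L2.flatten ++ (F (KM n ι χ) ++ ((lam2 n ι χ Eb).map F).flatten))) y
    simpa [List.append_assoc] using this
  · have := not_chain'_dup (L1.flatten ++ [y])
      (y :: (L2.flatten ++ (F (KM n ι χ) ++ ((lam2 n ι χ Eb).map F).flatten))) x
    simpa [List.append_assoc] using this
  · exact absurd rfl hst



open List

variable {V : Type*} [DecidableEq V] [Fintype V]

lemma filter_comm (w : List V) (x y : V) :
    w.filter (fun z => decide (z = x ∨ z = y)) = w.filter (fun z => decide (z = y ∨ z = x)) :=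
  List.filter_congr (fun z _ => decide_eq_decide.mpr or_comm)

theorem represents (n : ℕ) (ι : V → ℕ) (χ : V → Fin 3) (Eb : V → V → Bool)
    (hn : ∀ v, ι v < n) (hinj : Function.Injective ι)
    (hsym : ∀ u v, Eb u v = Eb v u)
    (hcol : ∀ u v, Eb u v = true → χ u ≠ χ v) :
    (∀ v, v ∈ word n ι χ Eb) ∧
    ∀ x y : V, x ≠ y → (Eb x y = true ↔
      ((word n ι χ Eb).filter (fun z => decide (z = x ∨ z = y))).Chain' (· ≠ ·)) := by
  refine ⟨mem_word hn, ?_⟩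
  intro x y hxy
  have tri : ∀ c : Fin 3, c = 0 ∨ c = 1 ∨ c = 2 := by decide
  rcases tri (χ x) with hx | hx | hx <;> rcases tri (χ y) with hy | hy | hy
  · exact coreSame hn hinj hcol hxy (hx.trans hy.symm)
  · exact core01 hn hinj hxy hx hy
  · exact core02 hn hinj hxy hx hy
  · rw [hsym x y, filter_comm (word n ι χ Eb) x y]
    exact core01 hn hinj (Ne.symm hxy) hy hx
  · exact coreSame hn hinj hcol hxy (hx.trans hy.symm)
  · exact core12 hn hinj hxy hx hy
  · rw [hsym x y, filter_comm (word n ι χ Eb) x y]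
    exact core02 hn hinj (Ne.symm hxy) hy hx
  · rw [hsym x y, filter_comm (word n ι χ Eb) x y]
    exact core12 hn hinj (Ne.symm hxy) hy hx
  · exact coreSame hn hinj hcol hxy (hx.trans hy.symm)


end WR3

/-- Every 3-colorable finite simple graph is word-representable. -/
theorem wordRepresentable_of_colorable_three {V : Type*} [Fintype V] [DecidableEq V]
    (G : SimpleGraph V) (h : G.Colorable 3) :
    WordRepresentable G := by
  classical
  obtain ⟨C⟩ := h
  set n := Fintype.card V with hn_def
  set e := Fintype.equivFin V with he_def
  set ι : V → ℕ := fun v => (e v : ℕ) with hι_def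
  have hn : ∀ v, ι v < n := fun v => (e v).isLt
  have hinj : Function.Injective ι := fun a b hab => e.injective (Fin.ext hab)
  set χ : V → Fin 3 := fun v => C v with hχ_def
  set Eb : V → V → Bool := fun u v => decide (G.Adj u v) with hEb_def
  have hsym : ∀ u v, Eb u v = Eb v u := by
    intro u v
    simp only [hEb_def]
    exact decide_eq_decide.mpr (G.adj_comm u v)
  have hcol : ∀ u v, Eb u v = true → χ u ≠ χ v := by
    intro u v huv
    exact C.valid (by simpa [hEb_def] using huv)
  obtain ⟨hmem, hiff⟩ := WR3.represents n ι χ Eb hn hinj hsym hcol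
  refine ⟨WR3.word n ι χ Eb, hmem, ?_⟩
  intro x y hxy
  have hadj : G.Adj x y ↔ Eb x y = true := by simp [hEb_def]
  rw [hadj]
  exact hiff x y hxy
end

section
/- For every k ≥ 3, the simplified de Bruijn graph S(2,k) is not word-representable. -/
set_option linter.unusedSectionVars false

variable {V : Type*} [DecidableEq V]

lemma head_filter_pos (p : V → Bool) : ∀ (l : List V) (h : V), (l.filter p).head? = some h →
    ∃ t : ℕ, l[t]? = some h ∧ ∀ s : ℕ, s < t → ∀ z, l[s]? = some z → p z = false := by
  intro l
  induction l with
  | nil => simp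
  | cons a l ih =>
    intro h hh
    by_cases hp : p a
    · rw [List.filter_cons_of_pos hp] at hh
      simp only [List.head?_cons, Option.some.injEq] at hh
      subst hh
      exact ⟨0, by simp, fun s hs => by omega⟩
    · rw [List.filter_cons_of_neg (by simpa using hp)] at hh
      obtain ⟨t, h1, h2⟩ := ih h hh
      refine ⟨t + 1, by simpa using h1, fun s hs z hz => ?_⟩
      match s with
      | 0 =>
        simp only [List.getElem?_cons_zero, Option.some.injEq] at hz
        subst hz; simpa using hp
      | s + 1 =>
        exact h2 s (by omega) z (by simpa using hz)

/-- Between two occurrences of `u` (in a word where `u,v` alternate) there is a `v`. -/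
lemma alt_sep {u v : V} (huv : u ≠ v) : ∀ (l : List V),
    (l.filter (fun z => decide (z = u ∨ z = v))).Chain' (· ≠ ·) →
    ∀ i j : ℕ, i < j → l[i]? = some u → l[j]? = some u →
    ∃ t : ℕ, i < t ∧ t < j ∧ l[t]? = some v := by
  intro l
  induction l with
  | nil => simp
  | cons a l ih =>
    intro hch i j hij hi hj
    match i, j with
    | 0, j + 1 =>
      simp only [List.getElem?_cons_zero, Option.some.injEq] at hi
      subst hi
      simp only [List.getElem?_cons_succ] at hj
      have hmem : a ∈ l := List.mem_of_getElem? hj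
      have hfm : a ∈ l.filter (fun z => decide (z = a ∨ z = v)) := by
        simp [List.mem_filter, hmem]
      rw [List.filter_cons_of_pos (by simp)] at hch
      obtain ⟨h, L, hL⟩ : ∃ h L, l.filter (fun z => decide (z = a ∨ z = v)) = h :: L := by
        rcases hfl : l.filter (fun z => decide (z = a ∨ z = v)) with _ | ⟨h, L⟩
        · rw [hfl] at hfm; simp at hfm
        · exact ⟨h, L, rfl⟩
      rw [hL] at hch
      have hne : a ≠ h := (List.isChain_cons_cons.1 hch).1
      have hhv : h = v := by
        have : h ∈ l.filter (fun z => decide (z = a ∨ z = v)) := by rw [hL]; simp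
        have := (List.mem_filter.1 this).2
        simp only [decide_eq_true_eq] at this
        rcases this with h1 | h1
        · exact absurd h1.symm hne
        · exact h1
      rw [hhv] at hL hne
      obtain ⟨t, ht1, ht2⟩ := head_filter_pos _ l v (by rw [hL]; rfl)
      refine ⟨t + 1, by omega, ?_, by simpa using ht1⟩
      by_contra hc
      have htj : j < t ∨ j = t := by omega
      rcases htj with htj | htj
      · have := ht2 j htj a hj
        simp at this
      · subst htj
        rw [ht1] at hj
        exact huv (by simpa using hj.symm)
    | i + 1, j + 1 =>
      simp only [List.getElem?_cons_succ] at hi hj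
      have hch' : (l.filter (fun z => decide (z = u ∨ z = v))).Chain' (· ≠ ·) := by
        rw [List.filter_cons] at hch
        split at hch
        · exact hch.tail
        · exact hch
      obtain ⟨t, h1, h2, h3⟩ := ih hch' i j (by omega) hi hj
      exact ⟨t + 1, by omega, by omega, by simpa using h3⟩

/-- From non-alternation: a "bad gap": two equal pair-letters with no pair-letter between. -/
lemma alt_neg {u v : V} : ∀ (l : List V),
    ¬ (l.filter (fun z => decide (z = u ∨ z = v))).Chain' (· ≠ ·) →
    ∃ (i j : ℕ) (z : V), i < j ∧ l[i]? = some z ∧ l[j]? = some z ∧ (z = u ∨ z = v) ∧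
      ∀ t : ℕ, i < t → t < j → ∀ y, l[t]? = some y → ¬(y = u ∨ y = v) := by
  intro l
  induction l with
  | nil => intro h; exact absurd List.isChain_nil h
  | cons a l ih =>
    intro h
    rw [List.filter_cons] at h
    split at h
    case isTrue hp =>
      unfold List.Chain' at h
      rw [List.isChain_cons] at h
      push_neg at h
      rcases Classical.em ((l.filter (fun z => decide (z = u ∨ z = v))).Chain' (· ≠ ·)) with hch | hch
      · have h2 : ¬ ∀ y ∈ (l.filter (fun z => decide (z = u ∨ z = v))).head?, a ≠ y :=
          fun hall => h hall hch
        push_neg at h2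
        obtain ⟨y, hy, hay⟩ := h2
        have hya : y = a := hay.symm
        subst hya
        obtain ⟨t, ht1, ht2⟩ := head_filter_pos _ l y hy
        refine ⟨0, t + 1, y, by omega, by simp, by simpa using ht1, by simpa using hp, ?_⟩
        intro s hs1 hs2 z hz hzuv
        match s with
        | s + 1 =>
          have h3 := ht2 s (by omega) z (by simpa using hz)
          rw [decide_eq_false_iff_not] at h3
          exact h3 hzuv
      · obtain ⟨i, j, z, h1, h2, h3, h4, h5⟩ := ih hch
        refine ⟨i + 1, j + 1, z, by omega, by simpa using h2, by simpa using h3, h4, ?_⟩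
        intro s hs1 hs2 y hy
        match s with
        | s + 1 => exact h5 s (by omega) (by omega) y (by simpa using hy)
    case isFalse hp =>
      obtain ⟨i, j, z, h1, h2, h3, h4, h5⟩ := ih h
      refine ⟨i + 1, j + 1, z, by omega, by simpa using h2, by simpa using h3, h4, ?_⟩
      intro s hs1 hs2 y hy
      match s with
      | 0 =>
        simp only [List.getElem?_cons_zero, Option.some.injEq] at hy
        subst hy
        simpa using hp
      | s + 1 => exact h5 s (by omega) (by omega) y (by simpa using hy)

lemma alternate_symm {w : List V} {u v : V} (h : Alternate w u v) : Alternate w v u := by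
  unfold Alternate at *
  rwa [List.filter_congr (fun z _ => by simp [or_comm] : ∀ z ∈ w,
    (fun z => decide (z = v ∨ z = u)) z = (fun z => decide (z = u ∨ z = v)) z)]

/-- If `u` occurs before `v` does, the first pair-letter of `w` is `u`. -/
lemma head_filter_pair {u v : V} (huv : u ≠ v) : ∀ (w : List V), u ∈ w → v ∈ w →
    w.idxOf u < w.idxOf v →
    (w.filter (fun z => decide (z = u ∨ z = v))).head? = some u := by
  intro w
  induction w with
  | nil => simp
  | cons a w ih =>
    intro hu hv hlt
    by_cases hau : a = u
    · subst hau
      rw [List.filter_cons_of_pos (by simp)]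
      rfl
    · by_cases hav : a = v
      · subst hav
        rw [List.idxOf_cons_self] at hlt
        omega
      · have h1 : (a :: w).idxOf u = w.idxOf u + 1 := List.idxOf_cons_ne w hau
        have h2 : (a :: w).idxOf v = w.idxOf v + 1 := List.idxOf_cons_ne w hav
        have hpa : ¬ (fun z => decide (z = u ∨ z = v)) a = true := by
          simp [hau, hav]
        rw [List.filter_cons, if_neg hpa]
        exact ih (by rcases List.mem_cons.1 hu with h | h; exact absurd h.symm hau; exact h)
          (by rcases List.mem_cons.1 hv with h | h; exact absurd h.symm hav; exact h)
          (by omega)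

lemma two_elem_filter {u v : V} (huv : u ≠ v) : ∀ (l : List V), l.Nodup →
    (∀ z ∈ l, z = u ∨ z = v) → u ∈ l → v ∈ l →
    l = [u, v] ∨ l = [v, u] := by
  intro l
  match l with
  | [] => intro _ _ hu _; simp at hu
  | [z] =>
    intro _ _ hu hv
    simp only [List.mem_singleton] at hu hv
    exact absurd (hu.trans hv.symm) huv
  | z1 :: z2 :: z3 :: l' =>
    intro hnd hsub _ _
    have h1 := hsub z1 (by simp)
    have h2 := hsub z2 (by simp)
    have h3 := hsub z3 (by simp)
    simp only [List.nodup_cons, List.mem_cons] at hnd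
    rcases h1 with rfl | rfl <;> rcases h2 with h2 | h2 <;> rcases h3 with h3 | h3 <;>
      simp_all
  | [z1, z2] =>
    intro hnd hsub hu hv
    have h1 := hsub z1 (by simp)
    have h2 := hsub z2 (by simp)
    simp only [List.nodup_cons, List.mem_cons] at hnd
    simp only [List.mem_cons, List.mem_singleton] at hu hv
    rcases h1 with rfl | rfl <;> rcases h2 with h2 | h2 <;> simp_all

lemma alt_prepend_aux (w : List V) (pre : List V) {u v : V} (huv : u ≠ v)
    (hu : u ∈ w) (hv : v ∈ w)
    (hpre : pre.filter (fun z => decide (z = u ∨ z = v)) = [u, v])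
    (hlt : w.idxOf u < w.idxOf v) :
    Alternate w u v ↔ Alternate (pre ++ w) u v := by
  unfold Alternate
  rw [List.filter_append, hpre]
  have hhead := head_filter_pair huv w hu hv hlt
  obtain ⟨L', hL'⟩ : ∃ L', w.filter (fun z => decide (z = u ∨ z = v)) = u :: L' := by
    rcases hfl : w.filter (fun z => decide (z = u ∨ z = v)) with _ | ⟨h, L⟩
    · rw [hfl] at hhead; simp at hhead
    · rw [hfl] at hhead; simp only [List.head?_cons, Option.some.injEq] at hhead
      exact ⟨L, by rw [hhead]⟩
  rw [hL']
  show (u :: L').Chain' (· ≠ ·) ↔ (u :: v :: u :: L').Chain' (· ≠ ·)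
  unfold List.Chain'
  rw [List.isChain_cons_cons, List.isChain_cons_cons]
  constructor
  · exact fun h => ⟨huv, huv.symm, h⟩
  · exact fun h => h.2.2

lemma indexOf_ne_of_ne {u v : V} {w : List V} (huv : u ≠ v) (hu : u ∈ w) (hv : v ∈ w) :
    w.idxOf u ≠ w.idxOf v := by
  intro h
  have h1 : w[w.idxOf u]? = some u := List.getElem?_idxOf hu
  have h2 : w[w.idxOf v]? = some v := List.getElem?_idxOf hv
  rw [h] at h1
  rw [h1] at h2
  exact huv (by simpa using h2)

lemma alt_prepend (w : List V) (S : List V) (hS : S.Nodup) (hmemS : ∀ z ∈ S, z ∈ w)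
    {u v : V} (hu : u ∈ S) (hv : v ∈ S) (huv : u ≠ v) :
    Alternate w u v ↔
      Alternate (List.insertionSort (fun y z => w.idxOf y ≤ w.idxOf z) S ++ w) u v := by
  set r : V → V → Prop := fun y z => w.idxOf y ≤ w.idxOf z with hr
  haveI : IsTotal V r := ⟨fun a b => le_total _ _⟩
  haveI : IsTrans V r := ⟨fun a b c h1 h2 => le_trans h1 h2⟩
  set p := List.insertionSort r S with hp
  have hperm : List.Perm p S := List.perm_insertionSort r S
  have hpnd : p.Nodup := hperm.nodup_iff.2 hS
  have hpmem : ∀ z, z ∈ p ↔ z ∈ S := fun z => hperm.mem_iff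
  have hsorted : p.Pairwise r := List.pairwise_insertionSort r S
  -- the filtered prefix
  have hfilt : ∀ {a b : V}, a ∈ S → b ∈ S → a ≠ b → w.idxOf a < w.idxOf b →
      p.filter (fun z => decide (z = a ∨ z = b)) = [a, b] := by
    intro a b ha hb hab hlt
    have hnd2 : (p.filter (fun z => decide (z = a ∨ z = b))).Nodup := hpnd.filter _
    have hsub : ∀ z ∈ p.filter (fun z => decide (z = a ∨ z = b)), z = a ∨ z = b := by
      intro z hz
      have := (List.mem_filter.1 hz).2
      simpa using this
    have hain : a ∈ p.filter (fun z => decide (z = a ∨ z = b)) :=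
      List.mem_filter.2 ⟨(hpmem a).2 ha, by simp⟩
    have hbin : b ∈ p.filter (fun z => decide (z = a ∨ z = b)) :=
      List.mem_filter.2 ⟨(hpmem b).2 hb, by simp⟩
    rcases two_elem_filter hab _ hnd2 hsub hain hbin with h | h
    · exact h
    · exfalso
      have hsf : (p.filter (fun z => decide (z = a ∨ z = b))).Pairwise r :=
        List.Pairwise.sublist List.filter_sublist hsorted
      rw [h] at hsf
      have : r b a := List.rel_of_pairwise_cons hsf (by simp)
      rw [hr] at this
      omega
  rcases (indexOf_ne_of_ne huv (hmemS u hu) (hmemS v hv)).lt_or_gt with hlt | hlt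
  · exact alt_prepend_aux w p huv (hmemS u hu) (hmemS v hv) (hfilt hu hv huv hlt) hlt
  · constructor
    · intro h
      exact alternate_symm ((alt_prepend_aux w p huv.symm (hmemS v hv) (hmemS u hu)
        (hfilt hv hu huv.symm hlt) hlt).1 (alternate_symm h))
    · intro h
      exact alternate_symm ((alt_prepend_aux w p huv.symm (hmemS v hv) (hmemS u hu)
        (hfilt hv hu huv.symm hlt) hlt).2 (alternate_symm h))

/-- `g0 < g1` are consecutive occurrences of `x` in `W`. -/
def ConsecX (W : List V) (x : V) (g0 g1 : ℕ) : Prop :=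
  g0 < g1 ∧ W[g0]? = some x ∧ W[g1]? = some x ∧
    ∀ s : ℕ, g0 < s → s < g1 → W[s]? ≠ some x

/-- `y` occurs before `z` inside the segment `(g0, g1)`. -/
def SegBefore (W : List V) (y z : V) (g0 g1 : ℕ) : Prop :=
  ∃ py pz : ℕ, g0 < py ∧ py < pz ∧ pz < g1 ∧ W[py]? = some y ∧ W[pz]? = some z

lemma exists_min_above (P : ℕ → Prop) (m : ℕ) : ∀ j : ℕ, m < j → P j →
    ∃ j', m < j' ∧ P j' ∧ ∀ s : ℕ, m < s → s < j' → ¬ P s := by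
  intro j
  induction j using Nat.strong_induction_on with
  | _ j ih =>
    intro hj hPj
    by_cases h : ∃ s, m < s ∧ s < j ∧ P s
    · obtain ⟨s, h1, h2, h3⟩ := h
      exact ih s h2 h1 h3
    · exact ⟨j, hj, hPj, fun s h1 h2 hP => h ⟨s, h1, h2, hP⟩⟩

lemma exists_max_below (P : ℕ → Prop) (m : ℕ) : ∀ j : ℕ, j < m → P j →
    ∃ j', j' < m ∧ P j' ∧ ∀ s : ℕ, j' < s → s < m → ¬ P s := by
  suffices h : ∀ n j, m - j ≤ n → j < m → P j →
      ∃ j', j' < m ∧ P j' ∧ ∀ s : ℕ, j' < s → s < m → ¬ P s by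
    intro j hj hPj; exact h (m - j) j le_rfl hj hPj
  intro n
  induction n with
  | zero => intro j h1 h2; omega
  | succ n ih =>
    intro j hn hj hPj
    by_cases h : ∃ s, j < s ∧ s < m ∧ P s
    · obtain ⟨s, h1, h2, h3⟩ := h
      exact ih s (by omega) h2 h3
    · exact ⟨j, hj, hPj, fun s h1 h2 hP => h ⟨s, h1, h2, hP⟩⟩

section Seg

variable {W : List V} {x : V}

/-- Each letter alternating with `x` occurs in every segment. -/
lemma seg_exists {y : V} (hxy : x ≠ y) (hAlt : Alternate W x y) {g0 g1 : ℕ}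
    (hseg : ConsecX W x g0 g1) : ∃ q : ℕ, g0 < q ∧ q < g1 ∧ W[q]? = some y := by
  obtain ⟨h1, h2, h3, _⟩ := hseg
  exact alt_sep hxy W hAlt g0 g1 h1 h2 h3

/-- Each letter alternating with `x` occurs at most once in a segment. -/
lemma seg_uniq {y : V} (hxy : x ≠ y) (hAlt : Alternate W x y) {g0 g1 q q' : ℕ}
    (hseg : ConsecX W x g0 g1) (hq0 : g0 < q) (hq1 : q < g1) (hq : W[q]? = some y)
    (hq0' : g0 < q') (hq1' : q' < g1) (hq' : W[q']? = some y) : q = q' := by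
  obtain ⟨h1, h2, h3, h4⟩ := hseg
  rcases lt_trichotomy q q' with h | h | h
  · obtain ⟨s, hs1, hs2, hs3⟩ := alt_sep hxy.symm W (alternate_symm hAlt) q q' h hq hq'
    exact absurd hs3 (h4 s (by omega) (by omega))
  · exact h
  · obtain ⟨s, hs1, hs2, hs3⟩ := alt_sep hxy.symm W (alternate_symm hAlt) q' q h hq' hq
    exact absurd hs3 (h4 s (by omega) (by omega))

/-- Order consistency for adjacent segments. -/
lemma cons_adj {y z : V} (hxy : x ≠ y) (hxz : x ≠ z) (hyz : y ≠ z)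
    (axy : Alternate W x y) (axz : Alternate W x z) (ayz : Alternate W y z)
    {g0 g1 g2 : ℕ} (h01 : ConsecX W x g0 g1) (h12 : ConsecX W x g1 g2)
    (hA : SegBefore W y z g0 g1) (hB : SegBefore W z y g1 g2) : False := by
  obtain ⟨py, pz, ha1, ha2, ha3, ha4, ha5⟩ := hA
  obtain ⟨pz', py', hb1, hb2, hb3, hb4, hb5⟩ := hB
  obtain ⟨q, hq1, hq2, hq3⟩ := alt_sep hyz.symm W (alternate_symm ayz) pz pz'
    (by omega) ha5 hb4
  -- q is a `y` strictly between pz and pz'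
  rcases lt_trichotomy q g1 with h | h | h
  · have := seg_uniq hxy axy h01 (by omega) h hq3 ha1 (by omega) ha4
    omega
  · subst h
    rw [h01.2.2.1] at hq3
    exact hxy (by simpa using hq3)
  · have := seg_uniq hxy axy h12 h (by omega) hq3 (by omega) hb3 hb5
    omega

lemma cons_chain {y z : V} (hxy : x ≠ y) (hxz : x ≠ z) (hyz : y ≠ z)
    (axy : Alternate W x y) (axz : Alternate W x z) (ayz : Alternate W y z) :
    ∀ (n g0 g1 G0 G1 : ℕ), G0 - g1 ≤ n → ConsecX W x g0 g1 → ConsecX W x G0 G1 →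
      g1 ≤ G0 → SegBefore W y z g0 g1 → SegBefore W z y G0 G1 → False := by
  intro n
  induction n using Nat.strong_induction_on with
  | _ n ih =>
    intro g0 g1 G0 G1 hle hA hB hg1G0 hSA hSB
    rcases eq_or_lt_of_le hg1G0 with heq | hlt
    · subst heq
      exact cons_adj hxy hxz hyz axy axz ayz hA hB hSA hSB
    · -- there is an x at G0 > g1; take the next segment after g1
      obtain ⟨n1, hn1, hn2, hn3⟩ := exists_min_above (fun s => W[s]? = some x) g1 G0 hlt hB.2.1
      have hseg1 : ConsecX W x g1 n1 := ⟨hn1, hA.2.2.1, hn2, hn3⟩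
      have hn1G0 : n1 ≤ G0 := by
        by_contra hc
        exact hn3 G0 hlt (by omega) hB.2.1
      obtain ⟨qy, hqy1, hqy2, hqy3⟩ := seg_exists hxy axy hseg1
      obtain ⟨qz, hqz1, hqz2, hqz3⟩ := seg_exists hxz axz hseg1
      have hne : qy ≠ qz := by
        intro h; rw [h, hqz3] at hqy3; exact hyz (by simpa using hqy3.symm)
      rcases hne.lt_or_gt with h | h
      · -- SegBefore y z g1 n1 : recurse
        exact ih (G0 - n1) (by omega) g1 n1 G0 G1 (by omega) hseg1 hB hn1G0
          ⟨qy, qz, hqy1, h, hqz2, hqy3, hqz3⟩ hSB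
      · -- SegBefore z y g1 n1 : contradiction with previous segment
        exact cons_adj hxy hxz hyz axy axz ayz hA hseg1 hSA
          ⟨qz, qy, hqz1, h, hqy2, hqz3, hqy3⟩

/-- Two ConsecX segments starting at the same point are equal. -/
lemma consec_eq {g0 g1 G1 : ℕ} (h1 : ConsecX W x g0 g1) (h2 : ConsecX W x g0 G1) :
    g1 = G1 := by
  rcases lt_trichotomy g1 G1 with h | h | h
  · exact absurd h1.2.2.1 (h2.2.2.2 g1 h1.1 h)
  · exact h
  · exact absurd h2.2.2.1 (h1.2.2.2 G1 h2.1 h)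

lemma cons_sym {y z : V} (hxy : x ≠ y) (hxz : x ≠ z) (hyz : y ≠ z)
    (axy : Alternate W x y) (axz : Alternate W x z) (ayz : Alternate W y z)
    {g0 g1 G0 G1 : ℕ} (hA : ConsecX W x g0 g1) (hB : ConsecX W x G0 G1)
    (hSA : SegBefore W y z g0 g1) (hSB : SegBefore W z y G0 G1) : False := by
  rcases lt_trichotomy g0 G0 with h | h | h
  · have hg1G0 : g1 ≤ G0 := by
      by_contra hc
      rcases lt_trichotomy g1 G0 with h2 | h2 | h2
      · omega
      · omega
      · exact hA.2.2.2 G0 h (by omega) hB.2.1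
    exact cons_chain hxy hxz hyz axy axz ayz (G0 - g1) g0 g1 G0 G1 le_rfl hA hB hg1G0 hSA hSB
  · subst h
    have := consec_eq hA hB
    subst this
    obtain ⟨py, pz, ha1, ha2, ha3, ha4, ha5⟩ := hSA
    obtain ⟨pz', py', hb1, hb2, hb3, hb4, hb5⟩ := hSB
    have h1 : py = py' := seg_uniq hxy axy hA ha1 (by omega) ha4 (by omega) hb3 hb5
    have h2 : pz = pz' := seg_uniq hxz axz hA (by omega) ha3 ha5 hb1 (by omega) hb4
    omega
  · have hG1g0 : G1 ≤ g0 := by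
      by_contra hc
      rcases lt_trichotomy G1 g0 with h2 | h2 | h2
      · omega
      · omega
      · exact hB.2.2.2 g0 h (by omega) hA.2.1
    exact cons_chain hxz hxy hyz.symm axz axy (alternate_symm ayz) (g0 - G1) G0 G1 g0 g1
      le_rfl hB hA hG1g0 hSB hSA

end Seg

lemma val_ne {W : List V} {p : ℕ} {a b : V} (hab : a ≠ b)
    (ha : W[p]? = some a) (hb : W[p]? = some b) : False := by
  rw [ha] at hb; exact hab (Option.some.inj hb)

lemma gap_letter {W : List V} {α β : V} (hab : α ≠ β) (aab : Alternate W α β)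
    {i j : ℕ} (hij : i < j) (hi : W[i]? = some α) (hj : W[j]? = some α)
    (hgapa : ∀ s : ℕ, i < s → s < j → W[s]? ≠ some α) :
    ∃ m : ℕ, i < m ∧ m < j ∧ W[m]? = some β ∧
      ∀ m' : ℕ, i < m' → m' < j → W[m']? = some β → m' = m := by
  obtain ⟨m, h1, h2, h3⟩ := alt_sep hab W aab i j hij hi hj
  refine ⟨m, h1, h2, h3, fun m' hm'1 hm'2 hm'3 => ?_⟩
  rcases lt_trichotomy m' m with h | h | h
  · obtain ⟨q, hq1, hq2, hq3⟩ := alt_sep hab.symm W (alternate_symm aab) m' m h hm'3 h3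
    exact absurd hq3 (hgapa q (by omega) (by omega))
  · exact h
  · obtain ⟨q, hq1, hq2, hq3⟩ := alt_sep hab.symm W (alternate_symm aab) m m' h h3 hm'3
    exact absurd hq3 (hgapa q (by omega) (by omega))

lemma wheel_core {W : List V} {x u v t : V}
    (hxu : x ≠ u) (hxv : x ≠ v) (hxt : x ≠ t) (huv : u ≠ v) (hut : u ≠ t) (hvt : v ≠ t)
    (axu : Alternate W x u) (axv : Alternate W x v) (axt : Alternate W x t)
    (auv : Alternate W u v) (avt : Alternate W v t) (naut : ¬ Alternate W u t)
    {Q0 Q1 su sv st : ℕ}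
    (hQ : ConsecX W x Q0 Q1)
    (hsu : Q0 < su ∧ su < Q1 ∧ W[su]? = some u)
    (hsv : Q0 < sv ∧ sv < Q1 ∧ W[sv]? = some v)
    (hst : Q0 < st ∧ st < Q1 ∧ W[st]? = some t)
    (h1 : su < sv) (h2 : sv < st) : False := by
  have hSuv : SegBefore W u v Q0 Q1 := ⟨su, sv, hsu.1, h1, hsv.2.1, hsu.2.2, hsv.2.2⟩
  have hSvt : SegBefore W v t Q0 Q1 := ⟨sv, st, hsv.1, h2, hst.2.1, hsv.2.2, hst.2.2⟩
  obtain ⟨i, j, z, hij, hi, hj, hzor, hgap⟩ := alt_neg (u := u) (v := t) W naut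
  have hgapu : ∀ s : ℕ, i < s → s < j → W[s]? ≠ some u := by
    intro s hs1 hs2 hs3
    exact hgap s hs1 hs2 u hs3 (Or.inl rfl)
  have hgapt : ∀ s : ℕ, i < s → s < j → W[s]? ≠ some t := by
    intro s hs1 hs2 hs3
    exact hgap s hs1 hs2 t hs3 (Or.inr rfl)
  rcases hzor with rfl | rfl
  · -- the bad gap is between two u's
    obtain ⟨m, hm1, hm2, hm3, hmu⟩ :=
      gap_letter hxu.symm (alternate_symm axu) hij hi hj hgapu
    obtain ⟨c0, hc1, hc2, hc3, hcu⟩ := gap_letter huv auv hij hi hj hgapu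
    by_cases hfwd : ∃ s : ℕ, m < s ∧ W[s]? = some x
    · obtain ⟨s0, hs01, hs02⟩ := hfwd
      obtain ⟨m', hm'1, hm'2, hm'3⟩ :=
        exists_min_above (fun s => W[s]? = some x) m s0 hs01 hs02
      have hseg : ConsecX W x m m' := ⟨hm'1, hm3, hm'2, hm'3⟩
      have hjm' : j < m' := by
        rcases lt_trichotomy m' j with h | h | h
        · have := hmu m' (by omega) (by omega) hm'2; omega
        · subst h; exact absurd hm'2 (fun hh => val_ne hxu.symm hj hh)
        · exact h
      rcases lt_trichotomy c0 m with hc0 | hc0 | hc0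
      · -- c0 before m
        obtain ⟨k, hk1, hk2, hk3⟩ := seg_exists hxv axv hseg
        have hkj : j < k := by
          rcases lt_trichotomy k j with h | h | h
          · have := hcu k (by omega) (by omega) hk3; omega
          · subst h; exact absurd hk3 (fun hh => val_ne huv hj hh)
          · exact h
        obtain ⟨hh, hhh1, hhh2, hhh3⟩ := seg_exists hxt axt hseg
        have hhj : j < hh := by
          rcases lt_trichotomy hh j with h | h | h
          · exact absurd hhh3 (hgapt hh (by omega) (by omega))
          · subst h; exact absurd hhh3 (fun hh2 => val_ne hut hj hh2)
          · exact h
        rcases lt_trichotomy hh k with hhk | hhk | hhk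
        · exact cons_sym hxv hxt hvt axv axt avt hQ hseg hSvt
            ⟨hh, k, hhh1, hhk, hk2, hhh3, hk3⟩
        · exact val_ne hvt.symm hhh3 (hhk ▸ hk3)
        · obtain ⟨q, hq1, hq2, hq3⟩ := alt_sep hvt W avt c0 k (by omega) hc3 hk3
          rcases lt_trichotomy q j with h | h | h
          · exact absurd hq3 (hgapt q (by omega) h)
          · subst h; exact val_ne hut.symm hq3 hj
          · have := seg_uniq hxt axt hseg (by omega) (by omega) hq3 hhh1 hhh2 hhh3
            omega
      · exact val_ne hxv (by rw [hc0]; exact hm3) hc3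
      · -- c0 after m : v before u in segment (m, m')
        exact cons_sym hxu hxv huv axu axv auv hQ hseg hSuv
          ⟨c0, j, hc0, hc2, hjm', hc3, hj⟩
    · -- backward: take the segment ending at m
      have hxlt : ∃ s : ℕ, s < m ∧ W[s]? = some x := by
        rcases lt_trichotomy Q1 m with h | h | h
        · exact ⟨Q1, h, hQ.2.2.1⟩
        · exact ⟨Q0, by omega, hQ.2.1⟩
        · exact absurd ⟨Q1, by omega, hQ.2.2.1⟩ hfwd
      obtain ⟨s0, hs01, hs02⟩ := hxlt
      obtain ⟨m'', hm''1, hm''2, hm''3⟩ :=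
        exists_max_below (fun s => W[s]? = some x) m s0 hs01 hs02
      have hseg : ConsecX W x m'' m := ⟨hm''1, hm''2, hm3, hm''3⟩
      have him'' : m'' < i := by
        rcases lt_trichotomy m'' i with h | h | h
        · exact h
        · subst h; exact absurd hm''2 (fun hh => val_ne hxu.symm hi hh)
        · have := hmu m'' h (by omega) hm''2; omega
      obtain ⟨g, hg1, hg2, hg3⟩ := seg_exists hxt axt hseg
      have hgi : g < i := by
        rcases lt_trichotomy g i with h | h | h
        · exact h
        · subst h; exact absurd hg3 (fun hh => val_ne hut hi hh)
        · exact absurd hg3 (hgapt g h (by omega))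
      rcases lt_trichotomy c0 m with hc0 | hc0 | hc0
      · -- order in (m'', m) : t then v
        exact cons_sym hxv hxt hvt axv axt avt hQ hseg hSvt
          ⟨g, c0, hg1, by omega, hc0, hg3, hc3⟩
      · exact val_ne hxv (by rw [hc0]; exact hm3) hc3
      · obtain ⟨k, hk1, hk2, hk3⟩ := seg_exists hxv axv hseg
        have hki : k < i := by
          rcases lt_trichotomy k i with h | h | h
          · exact h
          · subst h; exact absurd hk3 (fun hh => val_ne huv hi hh)
          · have := hcu k (by omega) (by omega) hk3; omega
        exact cons_sym hxu hxv huv axu axv auv hQ hseg hSuv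
          ⟨k, i, hk1, hki, hm1, hk3, hi⟩
  · -- the bad gap is between two t's
    obtain ⟨m, hm1, hm2, hm3, hmu⟩ :=
      gap_letter hxt.symm (alternate_symm axt) hij hi hj hgapt
    obtain ⟨c0, hc1, hc2, hc3, hcu⟩ :=
      gap_letter hvt.symm (alternate_symm avt) hij hi hj hgapt
    by_cases hfwd : ∃ s : ℕ, m < s ∧ W[s]? = some x
    · obtain ⟨s0, hs01, hs02⟩ := hfwd
      obtain ⟨m', hm'1, hm'2, hm'3⟩ :=
        exists_min_above (fun s => W[s]? = some x) m s0 hs01 hs02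
      have hseg : ConsecX W x m m' := ⟨hm'1, hm3, hm'2, hm'3⟩
      have hjm' : j < m' := by
        rcases lt_trichotomy m' j with h | h | h
        · have := hmu m' (by omega) (by omega) hm'2; omega
        · subst h; exact absurd hm'2 (fun hh => val_ne hxt.symm hj hh)
        · exact h
      rcases lt_trichotomy c0 m with hc0 | hc0 | hc0
      · -- v of the segment lies after j
        obtain ⟨k, hk1, hk2, hk3⟩ := seg_exists hxv axv hseg
        have hkj : j < k := by
          rcases lt_trichotomy k j with h | h | h
          · have := hcu k (by omega) (by omega) hk3; omega
          · subst h; exact absurd hk3 (fun hh => val_ne hvt hh hj)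
          · exact h
        exact cons_sym hxv hxt hvt axv axt avt hQ hseg hSvt
          ⟨j, k, hm2, hkj, hk2, hj, hk3⟩
      · exact val_ne hxv (by rw [hc0]; exact hm3) hc3
      · -- u of the segment lies after j ; v = c0 before j
        obtain ⟨g, hg1, hg2, hg3⟩ := seg_exists hxu axu hseg
        have hgj : j < g := by
          rcases lt_trichotomy g j with h | h | h
          · exact absurd hg3 (hgapu g (by omega) h)
          · subst h; exact absurd (val_ne hut.symm hj hg3) not_false
          · exact h
        exact cons_sym hxu hxv huv axu axv auv hQ hseg hSuv
          ⟨c0, g, hc0, by omega, hg2, hc3, hg3⟩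
    · have hxlt : ∃ s : ℕ, s < m ∧ W[s]? = some x := by
        rcases lt_trichotomy Q1 m with h | h | h
        · exact ⟨Q1, h, hQ.2.2.1⟩
        · exact ⟨Q0, by omega, hQ.2.1⟩
        · exact absurd ⟨Q1, by omega, hQ.2.2.1⟩ hfwd
      obtain ⟨s0, hs01, hs02⟩ := hxlt
      obtain ⟨m'', hm''1, hm''2, hm''3⟩ :=
        exists_max_below (fun s => W[s]? = some x) m s0 hs01 hs02
      have hseg : ConsecX W x m'' m := ⟨hm''1, hm''2, hm3, hm''3⟩
      have him'' : m'' < i := by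
        rcases lt_trichotomy m'' i with h | h | h
        · exact h
        · subst h; exact absurd hm''2 (fun hh => val_ne hxt.symm hi hh)
        · have := hmu m'' h (by omega) hm''2; omega
      obtain ⟨g, hg1, hg2, hg3⟩ := seg_exists hxu axu hseg
      have hgi : g < i := by
        rcases lt_trichotomy g i with h | h | h
        · exact h
        · subst h; exact absurd (val_ne hut.symm hi hg3) not_false
        · exact absurd hg3 (hgapu g h (by omega))
      rcases lt_trichotomy c0 m with hc0 | hc0 | hc0
      · -- t at i, v = c0 after i : t before v in (m'', m)
        exact cons_sym hxv hxt hvt axv axt avt hQ hseg hSvt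
          ⟨i, c0, him'', hc1, hc0, hi, hc3⟩
      · exact val_ne hxv (by rw [hc0]; exact hm3) hc3
      · obtain ⟨k, hk1, hk2, hk3⟩ := seg_exists hxv axv hseg
        have hki : k < i := by
          rcases lt_trichotomy k i with h | h | h
          · exact h
          · subst h; exact absurd hk3 (fun hh => val_ne hvt hh hi)
          · have := hcu k (by omega) (by omega) hk3; omega
        rcases lt_trichotomy k g with hkg | hkg | hkg
        · exact cons_sym hxu hxv huv axu axv auv hQ hseg hSuv
            ⟨k, g, hk1, hkg, hg2, hk3, hg3⟩
        · exact val_ne huv (hkg ▸ hg3) hk3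
        · obtain ⟨q, hq1, hq2, hq3⟩ :=
            alt_sep huv.symm W (alternate_symm auv) k c0 (by omega) hk3 hc3
          rcases lt_trichotomy q i with h | h | h
          · have := seg_uniq hxu axu hseg (by omega) (by omega) hq3 hg1 hg2 hg3
            omega
          · subst h; exact val_ne hut hq3 hi
          · exact absurd hq3 (hgapu q h (by omega))

lemma wheel_not_representable {W : List V} {x a b c d e : V}
    (hxa : x ≠ a) (hxb : x ≠ b) (hxc : x ≠ c) (hxd : x ≠ d) (hxe : x ≠ e)
    (hab : a ≠ b) (hac : a ≠ c) (had : a ≠ d) (hae : a ≠ e)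
    (hbc : b ≠ c) (hbd : b ≠ d) (hbe : b ≠ e)
    (hcd : c ≠ d) (hce : c ≠ e) (hde : d ≠ e)
    (hx2 : ∃ n1 n2 : ℕ, n1 < n2 ∧ W[n1]? = some x ∧ W[n2]? = some x)
    (axa : Alternate W x a) (axb : Alternate W x b) (axc : Alternate W x c)
    (axd : Alternate W x d) (axe : Alternate W x e)
    (aab : Alternate W a b) (abc : Alternate W b c) (acd : Alternate W c d)
    (ade : Alternate W d e) (aea : Alternate W e a)
    (nac : ¬ Alternate W a c) (nbd : ¬ Alternate W b d) (nce : ¬ Alternate W c e)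
    (nda : ¬ Alternate W d a) (neb : ¬ Alternate W e b) : False := by
  obtain ⟨n1, n2, hn12, hn1, hn2⟩ := hx2
  obtain ⟨q1, hq1a, hq1b, hq1c⟩ := exists_min_above (fun s => W[s]? = some x) n1 n2 hn12 hn2
  have hQ : ConsecX W x n1 q1 := ⟨hq1a, hn1, hq1b, hq1c⟩
  obtain ⟨sa, hsa1, hsa2, hsa3⟩ := seg_exists hxa axa hQ
  obtain ⟨sb, hsb1, hsb2, hsb3⟩ := seg_exists hxb axb hQ
  obtain ⟨sc, hsc1, hsc2, hsc3⟩ := seg_exists hxc axc hQ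
  obtain ⟨sd, hsd1, hsd2, hsd3⟩ := seg_exists hxd axd hQ
  obtain ⟨se, hse1, hse2, hse3⟩ := seg_exists hxe axe hQ
  have hsa : n1 < sa ∧ sa < q1 ∧ W[sa]? = some a := ⟨hsa1, hsa2, hsa3⟩
  have hsb : n1 < sb ∧ sb < q1 ∧ W[sb]? = some b := ⟨hsb1, hsb2, hsb3⟩
  have hsc : n1 < sc ∧ sc < q1 ∧ W[sc]? = some c := ⟨hsc1, hsc2, hsc3⟩
  have hsd : n1 < sd ∧ sd < q1 ∧ W[sd]? = some d := ⟨hsd1, hsd2, hsd3⟩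
  have hse : n1 < se ∧ se < q1 ∧ W[se]? = some e := ⟨hse1, hse2, hse3⟩
  -- symmetric versions
  have aba := alternate_symm aab
  have acb := alternate_symm abc
  have adc := alternate_symm acd
  have aed := alternate_symm ade
  have aae := alternate_symm aea
  have nca : ¬ Alternate W c a := fun h => nac (alternate_symm h)
  have ndb : ¬ Alternate W d b := fun h => nbd (alternate_symm h)
  have nec : ¬ Alternate W e c := fun h => nce (alternate_symm h)
  have nad : ¬ Alternate W a d := fun h => nda (alternate_symm h)
  have nbe : ¬ Alternate W b e := fun h => neb (alternate_symm h)
  have hba := hab.symm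
  have hca := hac.symm
  have hda := had.symm
  have hea := hae.symm
  have hcb := hbc.symm
  have hdb := hbd.symm
  have heb := hbe.symm
  have hdc := hcd.symm
  have hec := hce.symm
  have hed := hde.symm
  have K : ∀ (u v t : V) (su sv st : ℕ), x ≠ u → x ≠ v → x ≠ t → u ≠ v → u ≠ t → v ≠ t →
      Alternate W x u → Alternate W x v → Alternate W x t →
      Alternate W u v → Alternate W v t → ¬ Alternate W u t →
      (n1 < su ∧ su < q1 ∧ W[su]? = some u) →
      (n1 < sv ∧ sv < q1 ∧ W[sv]? = some v) →
      (n1 < st ∧ st < q1 ∧ W[st]? = some t) →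
      su < sv → sv < st → False := by
    intro u v t su sv st h1 h2 h3 h4 h5 h6 h7 h8 h9 h10 h11 h12 h13 h14 h15 h16 h17
    exact wheel_core h1 h2 h3 h4 h5 h6 h7 h8 h9 h10 h11 h12 hQ h13 h14 h15 h16 h17
  have ne_ab : sa ≠ sb := fun h => val_ne hab hsa3 (h ▸ hsb3)
  have ne_bc : sb ≠ sc := fun h => val_ne hbc hsb3 (h ▸ hsc3)
  have ne_cd : sc ≠ sd := fun h => val_ne hcd hsc3 (h ▸ hsd3)
  have ne_de : sd ≠ se := fun h => val_ne hde hsd3 (h ▸ hse3)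
  have ne_ea : se ≠ sa := fun h => val_ne hae.symm hse3 (h ▸ hsa3)
  rcases ne_ab.lt_or_gt with o1 | o1 <;>
  rcases ne_bc.lt_or_gt with o2 | o2 <;>
  rcases ne_cd.lt_or_gt with o3 | o3 <;>
  rcases ne_de.lt_or_gt with o4 | o4 <;>
  rcases ne_ea.lt_or_gt with o5 | o5 <;>
  first
  | exact K a b c sa sb sc hxa hxb hxc hab hac hbc axa axb axc aab abc nac ‹_› ‹_› ‹_› o1 o2
  | exact K b c d sb sc sd hxb hxc hxd hbc hbd hcd axb axc axd abc acd nbd ‹_› ‹_› ‹_› o2 o3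
  | exact K c d e sc sd se hxc hxd hxe hcd hce hde axc axd axe acd ade nce ‹_› ‹_› ‹_› o3 o4
  | exact K d e a sd se sa hxd hxe hxa hde hda hea axd axe axa ade aea nda ‹_› ‹_› ‹_› o4 o5
  | exact K e a b se sa sb hxe hxa hxb hea heb hab axe axa axb aea aab neb ‹_› ‹_› ‹_› o5 o1
  | exact K c b a sc sb sa hxc hxb hxa hcb hca hba axc axb axa acb aba nca ‹_› ‹_› ‹_› o2 o1
  | exact K d c b sd sc sb hxd hxc hxb hdc hdb hcb axd axc axb adc acb ndb ‹_› ‹_› ‹_› o3 o2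
  | exact K e d c se sd sc hxe hxd hxc hed hec hdc axe axd axc aed adc nec ‹_› ‹_› ‹_› o4 o3
  | exact K a e d sa se sd hxa hxe hxd hae had hed axa axe axd aae aed nad ‹_› ‹_› ‹_› o5 o4
  | exact K b a e sb sa se hxb hxa hxe hba hbe hae axb axa axe aba aae nbe ‹_› ‹_› ‹_› o1 o5

section GraphSide

lemma shift_iff {k : ℕ} (u v : Fin 2 → Fin k) : debruijnShift 2 k u v ↔ v 0 = u 1 := by
  constructor
  · intro h
    have := h 0 (by omega)
    simpa using this
  · intro h i hi
    obtain rfl : i = 0 := by omega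
    simpa using h

lemma adj_iff {k : ℕ} (u v : Fin 2 → Fin k) :
    (simplifiedDeBruijn 2 k).Adj u v ↔ u ≠ v ∧ (v 0 = u 1 ∨ u 0 = v 1) := by
  rw [simplifiedDeBruijn, SimpleGraph.fromRel_adj, shift_iff, shift_iff]

lemma vne {k : ℕ} {p q r s : Fin k} (h : p ≠ r ∨ q ≠ s) :
    (![p, q] : Fin 2 → Fin k) ≠ ![r, s] := by
  intro hEq
  rcases h with h | h
  · exact h (by simpa using congrFun hEq 0)
  · exact h (by simpa using congrFun hEq 1)

end GraphSide

/-- For every `k ≥ 3`, the simplified de Bruijn graph `S(2,k)` is not word-representable. -/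
theorem simplifiedDeBruijn_two_k_not_wordRepresentable (k : ℕ) (hk : 3 ≤ k) :
    ¬ WordRepresentable (simplifiedDeBruijn 2 k) := by
  rintro ⟨w, hmem, hiff⟩
  have h0k : 0 < k := by omega
  have h1k : 1 < k := by omega
  have h2k : 2 < k := by omega
  set l0 : Fin k := ⟨0, h0k⟩ with hl0
  set l1 : Fin k := ⟨1, h1k⟩ with hl1
  set l2 : Fin k := ⟨2, h2k⟩ with hl2
  have h01 : l0 ≠ l1 := by simp [hl0, hl1, Fin.ext_iff]
  have h02 : l0 ≠ l2 := by simp [hl0, hl2, Fin.ext_iff]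
  have h12 : l1 ≠ l2 := by simp [hl1, hl2, Fin.ext_iff]
  set X : Fin 2 → Fin k := ![l0, l1] with hX
  set A : Fin 2 → Fin k := ![l0, l0] with hA
  set B : Fin 2 → Fin k := ![l1, l0] with hB
  set C : Fin 2 → Fin k := ![l1, l1] with hC
  set D : Fin 2 → Fin k := ![l1, l2] with hD
  set E : Fin 2 → Fin k := ![l2, l0] with hE
  -- distinctness of the six vertices
  have hXA : X ≠ A := vne (Or.inr h01.symm)
  have hXB : X ≠ B := vne (Or.inl h01)
  have hXC : X ≠ C := vne (Or.inl h01)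
  have hXD : X ≠ D := vne (Or.inl h01)
  have hXE : X ≠ E := vne (Or.inl h02)
  have hAB : A ≠ B := vne (Or.inl h01)
  have hAC : A ≠ C := vne (Or.inl h01)
  have hAD : A ≠ D := vne (Or.inl h01)
  have hAE : A ≠ E := vne (Or.inl h02)
  have hBC : B ≠ C := vne (Or.inr h01)
  have hBD : B ≠ D := vne (Or.inr h02)
  have hBE : B ≠ E := vne (Or.inl h12)
  have hCD : C ≠ D := vne (Or.inr h12)
  have hCE : C ≠ E := vne (Or.inl h12)
  have hDE : D ≠ E := vne (Or.inl h12)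
  -- evaluation helper
  have ev0 : ∀ p q : Fin k, (![p, q] : Fin 2 → Fin k) 0 = p := fun p q => rfl
  have ev1 : ∀ p q : Fin k, (![p, q] : Fin 2 → Fin k) 1 = q := fun p q => rfl
  -- adjacency facts
  have adjXA : (simplifiedDeBruijn 2 k).Adj X A :=
    (adj_iff X A).2 ⟨hXA, Or.inr (by rw [hX, hA, ev0, ev1])⟩
  have adjXB : (simplifiedDeBruijn 2 k).Adj X B :=
    (adj_iff X B).2 ⟨hXB, Or.inl (by rw [hX, hB, ev0, ev1])⟩
  have adjXC : (simplifiedDeBruijn 2 k).Adj X C :=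
    (adj_iff X C).2 ⟨hXC, Or.inl (by rw [hX, hC, ev0, ev1])⟩
  have adjXD : (simplifiedDeBruijn 2 k).Adj X D :=
    (adj_iff X D).2 ⟨hXD, Or.inl (by rw [hX, hD, ev0, ev1])⟩
  have adjXE : (simplifiedDeBruijn 2 k).Adj X E :=
    (adj_iff X E).2 ⟨hXE, Or.inr (by rw [hX, hE, ev0, ev1])⟩
  have adjAB : (simplifiedDeBruijn 2 k).Adj A B :=
    (adj_iff A B).2 ⟨hAB, Or.inr (by rw [hA, hB, ev0, ev1])⟩
  have adjBC : (simplifiedDeBruijn 2 k).Adj B C :=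
    (adj_iff B C).2 ⟨hBC, Or.inr (by rw [hB, hC, ev0, ev1])⟩
  have adjCD : (simplifiedDeBruijn 2 k).Adj C D :=
    (adj_iff C D).2 ⟨hCD, Or.inl (by rw [hC, hD, ev0, ev1])⟩
  have adjDE : (simplifiedDeBruijn 2 k).Adj D E :=
    (adj_iff D E).2 ⟨hDE, Or.inl (by rw [hD, hE, ev0, ev1])⟩
  have adjEA : (simplifiedDeBruijn 2 k).Adj E A :=
    (adj_iff E A).2 ⟨hAE.symm, Or.inl (by rw [hE, hA, ev0, ev1])⟩
  -- non-adjacency facts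
  have nadjAC : ¬ (simplifiedDeBruijn 2 k).Adj A C := by
    rw [adj_iff]
    rintro ⟨-, h | h⟩
    · rw [hA, hC, ev0, ev1] at h; exact h01 h.symm
    · rw [hA, hC, ev0, ev1] at h; exact h01 h
  have nadjAD : ¬ (simplifiedDeBruijn 2 k).Adj A D := by
    rw [adj_iff]
    rintro ⟨-, h | h⟩
    · rw [hA, hD, ev0, ev1] at h; exact h01 h.symm
    · rw [hA, hD, ev0, ev1] at h; exact h02 h
  have nadjBD : ¬ (simplifiedDeBruijn 2 k).Adj B D := by
    rw [adj_iff]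
    rintro ⟨-, h | h⟩
    · rw [hB, hD, ev0, ev1] at h; exact h01 h.symm
    · rw [hB, hD, ev0, ev1] at h; exact h12 h
  have nadjBE : ¬ (simplifiedDeBruijn 2 k).Adj B E := by
    rw [adj_iff]
    rintro ⟨-, h | h⟩
    · rw [hB, hE, ev0, ev1] at h; exact h02 h.symm
    · rw [hB, hE, ev0, ev1] at h; exact h01 h.symm
  have nadjCE : ¬ (simplifiedDeBruijn 2 k).Adj C E := by
    rw [adj_iff]
    rintro ⟨-, h | h⟩
    · rw [hC, hE, ev0, ev1] at h; exact h12 h.symm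
    · rw [hC, hE, ev0, ev1] at h; exact h01 h.symm
  -- alternation facts in w
  have wXA : Alternate w X A := (hiff X A hXA).1 adjXA
  have wXB : Alternate w X B := (hiff X B hXB).1 adjXB
  have wXC : Alternate w X C := (hiff X C hXC).1 adjXC
  have wXD : Alternate w X D := (hiff X D hXD).1 adjXD
  have wXE : Alternate w X E := (hiff X E hXE).1 adjXE
  have wAB : Alternate w A B := (hiff A B hAB).1 adjAB
  have wBC : Alternate w B C := (hiff B C hBC).1 adjBC
  have wCD : Alternate w C D := (hiff C D hCD).1 adjCD
  have wDE : Alternate w D E := (hiff D E hDE).1 adjDE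
  have wEA : Alternate w E A := (hiff E A hAE.symm).1 adjEA
  have nwAC : ¬ Alternate w A C := fun h => nadjAC ((hiff A C hAC).2 h)
  have nwAD : ¬ Alternate w A D := fun h => nadjAD ((hiff A D hAD).2 h)
  have nwBD : ¬ Alternate w B D := fun h => nadjBD ((hiff B D hBD).2 h)
  have nwBE : ¬ Alternate w B E := fun h => nadjBE ((hiff B E hBE).2 h)
  have nwCE : ¬ Alternate w C E := fun h => nadjCE ((hiff C E hCE).2 h)
  -- prepend the initial permutation so that X occurs at least twice
  set SS : List (Fin 2 → Fin k) := [X, A, B, C, D, E] with hSS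
  have hSnd : SS.Nodup := by
    rw [hSS]
    simp only [List.nodup_cons, List.mem_cons, List.mem_singleton, List.not_mem_nil,
      or_false, not_or, List.nodup_nil, and_true]
    tauto
  have hmemS : ∀ z ∈ SS, z ∈ w := fun z _ => hmem z
  set pre : List (Fin 2 → Fin k) :=
    List.insertionSort (fun y z => w.idxOf y ≤ w.idxOf z) SS with hpre
  set W : List (Fin 2 → Fin k) := pre ++ w with hW
  have T : ∀ u v : Fin 2 → Fin k, u ∈ SS → v ∈ SS → u ≠ v →
      (Alternate w u v ↔ Alternate W u v) := by
    intro u v hu hv huv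
    exact alt_prepend w SS hSnd hmemS hu hv huv
  have mX : X ∈ SS := by rw [hSS]; simp
  have mA : A ∈ SS := by rw [hSS]; simp
  have mB : B ∈ SS := by rw [hSS]; simp
  have mC : C ∈ SS := by rw [hSS]; simp
  have mD : D ∈ SS := by rw [hSS]; simp
  have mE : E ∈ SS := by rw [hSS]; simp
  -- X occurs at least twice in W
  have hx2 : ∃ n1 n2 : ℕ, n1 < n2 ∧ W[n1]? = some X ∧ W[n2]? = some X := by
    have hXpre : X ∈ pre := by
      rw [hpre]
      exact (List.perm_insertionSort _ SS).mem_iff.2 mX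
    have hn1lt : pre.idxOf X < pre.length := List.idxOf_lt_length_iff.2 hXpre
    refine ⟨pre.idxOf X, pre.length + w.idxOf X, by omega, ?_, ?_⟩
    · rw [hW, List.getElem?_append_left hn1lt]
      exact List.getElem?_idxOf hXpre
    · rw [hW, List.getElem?_append_right (by omega)]
      have : pre.length + w.idxOf X - pre.length = w.idxOf X := by omega
      rw [this]
      exact List.getElem?_idxOf (hmem X)
  exact wheel_not_representable hXA hXB hXC hXD hXE hAB hAC hAD hAE hBC hBD hBE hCD hCE hDE
    hx2
    ((T X A mX mA hXA).1 wXA) ((T X B mX mB hXB).1 wXB) ((T X C mX mC hXC).1 wXC)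
    ((T X D mX mD hXD).1 wXD) ((T X E mX mE hXE).1 wXE)
    ((T A B mA mB hAB).1 wAB) ((T B C mB mC hBC).1 wBC) ((T C D mC mD hCD).1 wCD)
    ((T D E mD mE hDE).1 wDE) ((T E A mE mA hAE.symm).1 wEA)
    (fun h => nwAC ((T A C mA mC hAC).2 h))
    (fun h => nwBD ((T B D mB mD hBD).2 h))
    (fun h => nwCE ((T C E mC mE hCE).2 h))
    (fun h => nwAD ((T A D mA mD hAD).2 (alternate_symm h)))
    (fun h => nwBE ((T B E mB mE hBE).2 (alternate_symm h)))
end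

section
/- The simplified de Bruijn graph S(2,3) is not word-representable. -/
namespace DB23

set_option linter.unusedSectionVars false
open List



variable {V : Type*} [DecidableEq V]

/-- the filtering predicate used in `Alternate` -/
abbrev pp (x y : V) : V → Bool := fun z => decide (z = x ∨ z = y)

lemma mem_pair {x y z : V} {l : List V} (h : z ∈ l.filter (pp x y)) : z = x ∨ z = y := by
  simpa using (List.mem_filter.mp h).2

lemma prefix_filter_exists (p : V → Bool) :
    ∀ (w g : List V), g <+: w.filter p → ∃ n, g = (w.take n).filter p := by
  intro w
  induction w with
  | nil => intro g hg; exact ⟨0, by simpa using (List.prefix_nil.mp (by simpa using hg))⟩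
  | cons a w ih =>
    intro g hg
    by_cases hpa : p a
    · rw [List.filter_cons_of_pos hpa] at hg
      cases g with
      | nil => exact ⟨0, rfl⟩
      | cons b g' =>
        rw [List.cons_prefix_cons] at hg
        obtain ⟨rfl, hg'⟩ := hg
        obtain ⟨n, hn⟩ := ih g' hg'
        exact ⟨n + 1, by simp [List.filter_cons_of_pos hpa, hn]⟩
    · rw [List.filter_cons_of_neg hpa] at hg
      obtain ⟨n, hn⟩ := ih g hg
      exact ⟨n + 1, by simp [List.filter_cons_of_neg hpa, hn]⟩

lemma altA_count {x y : V} (hxy : x ≠ y) :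
    ∀ (f : List V), (∀ z ∈ f, z = x ∨ z = y) → f.Chain' (· ≠ ·) → f.head? ≠ some y →
      count y f ≤ count x f ∧ count x f ≤ count y f + 1
  | [] => fun _ _ _ => by simp
  | [a] => fun hm _ hh => by
      have ha : a = x := by
        rcases hm a (by simp) with h | h
        · exact h
        · exact absurd (by simp [h]) hh
      subst ha
      simp [count_cons, hxy, Ne.symm hxy]
  | a :: b :: t => fun hm hc hh => by
      have ha : a = x := by
        rcases hm a (by simp) with h | h
        · exact h
        · exact absurd (by simp [h]) hh
      have hab : a ≠ b := (List.isChain_cons_cons.mp hc).1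
      have hb : b = y := by
        rcases hm b (by simp) with h | h
        · exact absurd (ha.trans h.symm) hab
        · exact h
      have hcbt : List.Chain' (· ≠ ·) (b :: t) := (List.isChain_cons_cons.mp hc).2
      have hct : List.Chain' (· ≠ ·) t := hcbt.tail
      have hht : t.head? ≠ some y := by
        cases t with
        | nil => simp
        | cons c t' =>
          have hyc : b ≠ c := (List.isChain_cons_cons.mp hcbt).1
          simp only [List.head?_cons, ne_eq, Option.some.injEq]
          exact fun h => hyc (hb.trans h.symm)
      have IH := altA_count hxy t (fun z hz => hm z (by simp [hz])) hct hht
      simp only [ha, hb, List.count_cons, beq_iff_eq, hxy, Ne.symm hxy, if_false, if_true,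
        ite_true, ite_false]
      omega

lemma filter_pair_symm (w : List V) (x y : V) : w.filter (pp x y) = w.filter (pp y x) := by
  apply List.filter_congr
  intro z _
  simp [pp, or_comm]

lemma alternate_def (w : List V) (x y : V) :
    Alternate w x y ↔ (w.filter (pp x y)).Chain' (· ≠ ·) := Iff.rfl

lemma alternate_symm {w : List V} {x y : V} (h : Alternate w x y) : Alternate w y x := by
  rw [alternate_def, ← filter_pair_symm]
  exact h

/-- transfer count facts from `f`-prefixes to `w`-prefixes -/
lemma alt_count_le {w : List V} {x y : V} (hxy : x ≠ y)
    (halt : Alternate w x y) (hhead : (w.filter (pp x y)).head? ≠ some y) :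
    ∀ n, count y (w.take n) ≤ count x (w.take n) ∧
      count x (w.take n) ≤ count y (w.take n) + 1 := by
  intro n
  have hpre : (w.take n).filter (pp x y) <+: w.filter (pp x y) :=
    (List.take_prefix n w).filter _
  have hchain : ((w.take n).filter (pp x y)).Chain' (· ≠ ·) :=
    (alternate_def w x y |>.mp halt).prefix hpre
  have hhead' : ((w.take n).filter (pp x y)).head? ≠ some y := by
    obtain ⟨t, ht⟩ := hpre
    cases hg : (w.take n).filter (pp x y) with
    | nil => simp
    | cons b g' =>
      intro hb
      apply hhead
      rw [← ht, hg]
      simpa using hb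
  have h := altA_count hxy _ (fun z hz => mem_pair hz) hchain hhead'
  have hcx : count x ((w.take n).filter (pp x y)) = count x (w.take n) :=
    List.count_filter (by simp [pp])
  have hcy : count y ((w.take n).filter (pp x y)) = count y (w.take n) :=
    List.count_filter (by simp [pp])
  rw [hcx, hcy] at h
  exact h

lemma head_ne_of_L {w : List V} {x y : V} (hxy : x ≠ y)
    (hL : ∀ n, count y (w.take n) ≤ count x (w.take n)) :
    (w.filter (pp x y)).head? ≠ some y := by
  intro h
  cases hfil : w.filter (pp x y) with
  | nil => rw [hfil] at h; simp at h
  | cons b t =>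
    rw [hfil] at h
    have hb : b = y := by simpa using h
    have hp : [b] <+: w.filter (pp x y) := by rw [hfil]; exact ⟨t, rfl⟩
    obtain ⟨m, hm⟩ := prefix_filter_exists (pp x y) w _ hp
    have h1 : count y (w.take m) ≥ 1 := by
      rw [← List.count_filter (l := w.take m) (p := pp x y) (by simp [pp]), ← hm]
      simp [hb]
    have h2 : count x (w.take m) = 0 := by
      rw [← List.count_filter (l := w.take m) (p := pp x y) (by simp [pp]), ← hm]
      simp [hb, hxy, Ne.symm hxy, List.count_cons]
    have := hL m
    omega

/-- Counts in prefixes control alternation. -/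
lemma altB {w : List V} {x y : V} (hxy : x ≠ y)
    (h : ∀ n, count y (w.take n) ≤ count x (w.take n) ∧
      count x (w.take n) ≤ count y (w.take n) + 1) :
    Alternate w x y := by
  rw [alternate_def]
  generalize hf : w.filter (pp x y) = f
  rw [show List.Chain' _ f ↔ List.IsChain _ f from Iff.rfl, List.isChain_iff_getElem]
  intro i hi
  intro heq
  have hilen : i + 1 < f.length := by omega
  have key : ∀ m, count y (f.take m) ≤ count x (f.take m) ∧
      count x (f.take m) ≤ count y (f.take m) + 1 := by
    intro m
    obtain ⟨n, hn⟩ := prefix_filter_exists (pp x y) w (f.take m)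
      (hf ▸ List.take_prefix m f)
    rw [hn, List.count_filter (by simp [pp]), List.count_filter (by simp [pp])]
    exact h n
  have e1 : f.take (i + 1) = f.take i ++ [f.get ⟨i, by omega⟩] := by
    rw [List.take_succ]
    congr 1
    rw [List.getElem?_eq_getElem (by omega)]
    simp [List.get_eq_getElem]
  have e2 : f.take (i + 2) = f.take (i + 1) ++ [f.get ⟨i + 1, hilen⟩] := by
    rw [show i + 2 = (i + 1) + 1 from rfl, List.take_succ]
    congr 1
    rw [List.getElem?_eq_getElem hilen]
    simp [List.get_eq_getElem]
  have hmemf : f.get ⟨i, by omega⟩ ∈ w.filter (pp x y) := by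
    rw [hf]; exact List.get_mem f ⟨i, by omega⟩
  have ha : f.get ⟨i, by omega⟩ = x ∨ f.get ⟨i, by omega⟩ = y := mem_pair hmemf
  have k0 := key i
  have k1 := key (i + 1)
  have k2 := key (i + 2)
  replace heq : f.get ⟨i, by omega⟩ = f.get ⟨i + 1, hilen⟩ := by simpa using heq
  rw [e2, ← heq, e1] at k2
  rw [e1] at k1
  rcases ha with ha | ha <;>
    rw [ha] at k1 k2 <;>
    simp [List.count_append, hxy, Ne.symm hxy] at k1 k2 <;>
    omega

theorem exists_semitrans {G : SimpleGraph V} (h : WordRepresentable G) :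
    ∃ rel : V → V → Prop, IsOrientation G rel ∧ IsSemiTransitive G rel := by
  obtain ⟨w, hmem, hiff⟩ := h
  classical
  let L : V → V → Prop := fun x y => ∀ n, count y (w.take n) ≤ count x (w.take n)
  let rel : V → V → Prop := fun x y => G.Adj x y ∧ L x y
  have hLrefl : ∀ x, L x x := fun x n => le_refl _
  have hLtrans : ∀ {x y z}, L x y → L y z → L x z := fun h1 h2 n => (h2 n).trans (h1 n)
  have hnotboth : ∀ x y, x ≠ y → ¬ (L x y ∧ L y x) := by
    rintro x y hxy ⟨h1, h2⟩
    have hx : x ∈ w.filter (pp x y) := List.mem_filter.mpr ⟨hmem x, by simp [pp]⟩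
    cases hfil : w.filter (pp x y) with
    | nil => rw [hfil] at hx; simp at hx
    | cons a t =>
      have hpf : [a] <+: w.filter (pp x y) := by rw [hfil]; exact ⟨t, rfl⟩
      obtain ⟨m, hm⟩ := prefix_filter_exists (pp x y) w _ hpf
      have hax : a = x ∨ a = y := mem_pair (l := w) (by rw [hfil]; simp)
      have hcx : count x (w.take m) = count x [a] := by
        rw [← List.count_filter (l := w.take m) (p := pp x y) (by simp [pp]), ← hm]
      have hcy : count y (w.take m) = count y [a] := by
        rw [← List.count_filter (l := w.take m) (p := pp x y) (by simp [pp]), ← hm]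
      have e1 := h1 m
      have e2 := h2 m
      rcases hax with ha | ha <;> rw [ha] at hcx hcy <;>
        simp [List.count_cons, hxy, Ne.symm hxy] at hcx hcy <;> omega
  have hdichot : ∀ x y, x ≠ y → Alternate w x y → L x y ∨ L y x := by
    intro x y hxy halt
    have hx : x ∈ w.filter (pp x y) := List.mem_filter.mpr ⟨hmem x, by simp [pp]⟩
    cases hfil : w.filter (pp x y) with
    | nil => rw [hfil] at hx; simp at hx
    | cons a t =>
      have hax : a = x ∨ a = y := mem_pair (l := w) (by rw [hfil]; simp)
      rcases hax with ha | ha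
      · left
        intro n
        exact (alt_count_le hxy halt (by rw [hfil]; simp [ha, hxy]) n).1
      · right
        intro n
        have halt' : Alternate w y x := alternate_symm halt
        exact (alt_count_le (Ne.symm hxy) halt'
          (by rw [← filter_pair_symm, hfil]; simp [ha, Ne.symm hxy]) n).1
  have hrelstrict : ∀ {x y}, rel x y → L x y ∧ ¬ L y x := by
    rintro x y ⟨hadj, hL⟩
    exact ⟨hL, fun hL' => hnotboth x y hadj.ne ⟨hL, hL'⟩⟩
  refine ⟨rel, ⟨fun x y hr => hr.1, ?_⟩, ?_, ?_⟩
  · intro x y hadj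
    constructor
    · intro hr hr'
      exact (hrelstrict hr).2 hr'.2
    · intro hn
      rcases hdichot x y hadj.ne ((hiff x y hadj.ne).mp hadj) with hL | hL
      · exact ⟨hadj, hL⟩
      · exact absurd ⟨hadj.symm, hL⟩ hn
  · intro v hv
    have hS : Transitive (fun a b => L a b ∧ ¬ L b a) := by
      rintro a b c ⟨h1, h2⟩ ⟨h3, h4⟩
      exact ⟨hLtrans h1 h3, fun h5 => h2 (hLtrans h3 h5)⟩
    have hv' := Relation.TransGen.mono (p := fun a b => L a b ∧ ¬ L b a) (fun a b hr => hrelstrict hr) _ _ hv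
    rw [@Relation.transGen_eq_self _ (fun a b => L a b ∧ ¬ L b a) ⟨fun _ _ _ h1 h2 => hS h1 h2⟩] at hv'
    exact hv'.2 hv'.1
  · intro k p hp
    cases k with
    | zero =>
      left
      exact G.irrefl
    | succ k' =>
      by_cases hadj : G.Adj (p 0) (p (Fin.last (k' + 1)))
      case neg => left; exact hadj
      case pos =>
      right
      have hstep : ∀ (i : Fin (k' + 2)) (hik : (i : ℕ) < k' + 1),
          rel (p i) (p ⟨(i : ℕ) + 1, by omega⟩) := by
        intro i hik
        have hr := hp ⟨(i : ℕ), hik⟩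
        have e1 : (⟨(i : ℕ), hik⟩ : Fin (k' + 1)).castSucc = i := Fin.ext rfl
        have e2 : (⟨(i : ℕ), hik⟩ : Fin (k' + 1)).succ
            = (⟨(i : ℕ) + 1, by omega⟩ : Fin (k' + 2)) := Fin.ext rfl
        rw [e1, e2] at hr
        exact hr
      have hchain : ∀ (d : ℕ), ∀ (i j : Fin (k' + 2)), (j : ℕ) = (i : ℕ) + d + 1 →
          L (p i) (p j) ∧ ¬ L (p j) (p i) := by
        intro d
        induction d with
        | zero =>
          intro i j hj
          have hik : (i : ℕ) < k' + 1 := by have := j.isLt; omega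
          have hr := hstep i hik
          have e : (⟨(i : ℕ) + 1, by omega⟩ : Fin (k' + 2)) = j := Fin.ext (by simp; omega)
          rw [e] at hr
          exact hrelstrict hr
        | succ d ih =>
          intro i j hj
          have hik : (i : ℕ) < k' + 1 := by have := j.isLt; omega
          have h1 := hrelstrict (hstep i hik)
          have h2 := ih ⟨(i : ℕ) + 1, by have := j.isLt; omega⟩ j (by simp; omega)
          exact ⟨hLtrans h1.1 h2.1, fun h5 => h2.2 (hLtrans h5 h1.1)⟩
      have hstrict : ∀ i j : Fin (k' + 2), i < j → L (p i) (p j) ∧ ¬ L (p j) (p i) := by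
        intro i j hij
        have hij' : (i : ℕ) < (j : ℕ) := hij
        exact hchain ((j : ℕ) - (i : ℕ) - 1) i j (by omega)
      have h0last := hstrict 0 (Fin.last (k' + 1))
        (by rw [Fin.lt_def]; simp)
      have haltmain : Alternate w (p 0) (p (Fin.last (k' + 1))) := (hiff _ _ hadj.ne).mp hadj
      have hLmain : L (p 0) (p (Fin.last (k' + 1))) := by
        rcases hdichot _ _ hadj.ne haltmain with hl | hl
        · exact hl
        · exact absurd hl h0last.2
      have hub : ∀ n, count (p 0) (w.take n) ≤ count (p (Fin.last (k' + 1))) (w.take n) + 1 :=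
        fun n => (alt_count_le hadj.ne haltmain (head_ne_of_L hadj.ne hLmain) n).2
      intro i j hij
      have hSij := hstrict i j hij
      have hpij : p i ≠ p j := by
        intro he
        apply hSij.2
        rw [he]
        exact hLrefl _
      have hL0i : L (p 0) (p i) := by
        by_cases hi : i = 0
        · rw [hi]; exact hLrefl _
        · exact (hstrict 0 i (Fin.pos_of_ne_zero hi)).1
      have hLjlast : L (p j) (p (Fin.last (k' + 1))) := by
        by_cases hj : j = Fin.last (k' + 1)
        · rw [hj]; exact hLrefl _
        · exact (hstrict j _ (lt_of_le_of_ne (Fin.le_last j) hj)).1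
      have hcnt : ∀ n, count (p j) (w.take n) ≤ count (p i) (w.take n) ∧
          count (p i) (w.take n) ≤ count (p j) (w.take n) + 1 := by
        intro n
        refine ⟨hSij.1 n, ?_⟩
        have a1 := hL0i n
        have a2 := hub n
        have a3 := hLjlast n
        omega
      exact ⟨(hiff _ _ hpij).mpr (altB hpij hcnt), hSij.1⟩

section W5
variable {W : Type*}
set_option maxHeartbeats 8000000 in
lemma no_w5 (Adj rel : W → W → Prop)
    (v0 v1 v2 v3 v4 v5 : W)
    (htot : ∀ u v, Adj u v → rel u v ∨ rel v u)
    (htri : ∀ a b c, rel a b → rel b c → rel c a → False)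
    (hk3 : ∀ a b c d, rel a b → rel b c → rel c d → Adj a d → Adj a c ∧ Adj b d)
    (hA01 : Adj v0 v1)
    (hA04 : Adj v0 v4)
    (hA05 : Adj v0 v5)
    (hA10 : Adj v1 v0)
    (hA12 : Adj v1 v2)
    (hA15 : Adj v1 v5)
    (hA21 : Adj v2 v1)
    (hA23 : Adj v2 v3)
    (hA25 : Adj v2 v5)
    (hA32 : Adj v3 v2)
    (hA34 : Adj v3 v4)
    (hA35 : Adj v3 v5)
    (hA40 : Adj v4 v0)
    (hA43 : Adj v4 v3)
    (hA45 : Adj v4 v5)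
    (hA50 : Adj v5 v0)
    (hA51 : Adj v5 v1)
    (hA52 : Adj v5 v2)
    (hA53 : Adj v5 v3)
    (hA54 : Adj v5 v4)
    (hN02 : ¬ Adj v0 v2)
    (hN03 : ¬ Adj v0 v3)
    (hN13 : ¬ Adj v1 v3)
    (hN14 : ¬ Adj v1 v4)
    (hN20 : ¬ Adj v2 v0)
    (hN24 : ¬ Adj v2 v4)
    (hN30 : ¬ Adj v3 v0)
    (hN31 : ¬ Adj v3 v1)
    (hN41 : ¬ Adj v4 v1)
    (hN42 : ¬ Adj v4 v2) : False := by
  rcases htot v0 v1 hA01 with h0 | h0 <;>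
    rcases htot v1 v2 hA12 with h1 | h1 <;>
    rcases htot v2 v3 hA23 with h2 | h2 <;>
    rcases htot v3 v4 hA34 with h3 | h3 <;>
    rcases htot v4 v0 hA40 with h4 | h4 <;>
    rcases htot v0 v5 hA05 with h5 | h5 <;>
    rcases htot v1 v5 hA15 with h6 | h6 <;>
    rcases htot v2 v5 hA25 with h7 | h7 <;>
    rcases htot v3 v5 hA35 with h8 | h8 <;>
    rcases htot v4 v5 hA45 with h9 | h9 <;>
    first
    | exact htri v0 v1 v5 ‹rel v0 v1› ‹rel v1 v5› ‹rel v5 v0›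
    | exact htri v0 v5 v1 ‹rel v0 v5› ‹rel v5 v1› ‹rel v1 v0›
    | exact htri v0 v4 v5 ‹rel v0 v4› ‹rel v4 v5› ‹rel v5 v0›
    | exact htri v0 v5 v4 ‹rel v0 v5› ‹rel v5 v4› ‹rel v4 v0›
    | exact htri v1 v2 v5 ‹rel v1 v2› ‹rel v2 v5› ‹rel v5 v1›
    | exact htri v1 v5 v2 ‹rel v1 v5› ‹rel v5 v2› ‹rel v2 v1›
    | exact htri v2 v3 v5 ‹rel v2 v3› ‹rel v3 v5› ‹rel v5 v2›
    | exact htri v2 v5 v3 ‹rel v2 v5› ‹rel v5 v3› ‹rel v3 v2›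
    | exact hN03 (hk3 v0 v4 v3 v5 ‹rel v0 v4› ‹rel v4 v3› ‹rel v3 v5› hA05).1
    | exact hN24 (hk3 v2 v3 v4 v5 ‹rel v2 v3› ‹rel v3 v4› ‹rel v4 v5› hA25).1
    | exact hN42 (hk3 v3 v4 v5 v2 ‹rel v3 v4› ‹rel v4 v5› ‹rel v5 v2› hA32).2
    | exact hN30 (hk3 v4 v3 v5 v0 ‹rel v4 v3› ‹rel v3 v5› ‹rel v5 v0› hA40).2
    | exact hN03 (hk3 v5 v0 v4 v3 ‹rel v5 v0› ‹rel v0 v4› ‹rel v4 v3› hA53).2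
    | exact hN24 (hk3 v5 v2 v3 v4 ‹rel v5 v2› ‹rel v2 v3› ‹rel v3 v4› hA54).2
    | exact hN24 (hk3 v3 v2 v5 v4 ‹rel v3 v2› ‹rel v2 v5› ‹rel v5 v4› hA34).2
    | exact hN03 (hk3 v4 v0 v5 v3 ‹rel v4 v0› ‹rel v0 v5› ‹rel v5 v3› hA43).2
    | exact hN31 (hk3 v5 v3 v2 v1 ‹rel v5 v3› ‹rel v3 v2› ‹rel v2 v1› hA51).2
    | exact hN14 (hk3 v0 v1 v5 v4 ‹rel v0 v1› ‹rel v1 v5› ‹rel v5 v4› hA04).2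
    | exact hN14 (hk3 v1 v5 v4 v0 ‹rel v1 v5› ‹rel v5 v4› ‹rel v4 v0› hA10).1
    | exact hN30 (hk3 v3 v5 v0 v4 ‹rel v3 v5› ‹rel v5 v0› ‹rel v0 v4› hA34).1
    | exact hN42 (hk3 v4 v5 v2 v3 ‹rel v4 v5› ‹rel v5 v2› ‹rel v2 v3› hA43).1
    | exact hN41 (hk3 v5 v4 v0 v1 ‹rel v5 v4› ‹rel v4 v0› ‹rel v0 v1› hA51).2
    | exact hN20 (hk3 v2 v1 v0 v5 ‹rel v2 v1› ‹rel v1 v0› ‹rel v0 v5› hA25).1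
    | exact hN41 (hk3 v4 v0 v1 v5 ‹rel v4 v0› ‹rel v0 v1› ‹rel v1 v5› hA45).1
    | exact hN02 (hk3 v1 v0 v5 v2 ‹rel v1 v0› ‹rel v0 v5› ‹rel v5 v2› hA12).2
    | exact hN41 (hk3 v0 v4 v5 v1 ‹rel v0 v4› ‹rel v4 v5› ‹rel v5 v1› hA01).2
    | exact hN02 (hk3 v0 v5 v2 v1 ‹rel v0 v5› ‹rel v5 v2› ‹rel v2 v1› hA01).1
    | exact hN03 (hk3 v0 v5 v3 v4 ‹rel v0 v5› ‹rel v5 v3› ‹rel v3 v4› hA04).1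
    | exact hN20 (hk3 v1 v2 v5 v0 ‹rel v1 v2› ‹rel v2 v5› ‹rel v5 v0› hA10).2
    | exact hN13 (hk3 v1 v5 v3 v2 ‹rel v1 v5› ‹rel v5 v3› ‹rel v3 v2› hA12).1
    | exact hN13 (hk3 v2 v1 v5 v3 ‹rel v2 v1› ‹rel v1 v5› ‹rel v5 v3› hA23).2
    | exact hN31 (hk3 v2 v3 v5 v1 ‹rel v2 v3› ‹rel v3 v5› ‹rel v5 v1› hA21).2
    | exact hN20 (hk3 v2 v5 v0 v1 ‹rel v2 v5› ‹rel v5 v0› ‹rel v0 v1› hA21).1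
    | exact hN24 (hk3 v2 v5 v4 v3 ‹rel v2 v5› ‹rel v5 v4› ‹rel v4 v3› hA23).1
    | exact hN31 (hk3 v3 v5 v1 v2 ‹rel v3 v5› ‹rel v5 v1› ‹rel v1 v2› hA32).1
    | exact hN41 (hk3 v4 v5 v1 v0 ‹rel v4 v5› ‹rel v5 v1› ‹rel v1 v0› hA40).1
    | exact hN02 (hk3 v0 v1 v2 v5 ‹rel v0 v1› ‹rel v1 v2› ‹rel v2 v5› hA05).1
    | exact hN14 (hk3 v1 v0 v4 v5 ‹rel v1 v0› ‹rel v0 v4› ‹rel v4 v5› hA15).1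
    | exact hN13 (hk3 v1 v2 v3 v5 ‹rel v1 v2› ‹rel v2 v3› ‹rel v3 v5› hA15).1
    | exact hN31 (hk3 v3 v2 v1 v5 ‹rel v3 v2› ‹rel v2 v1› ‹rel v1 v5› hA35).1
    | exact hN30 (hk3 v3 v4 v0 v5 ‹rel v3 v4› ‹rel v4 v0› ‹rel v0 v5› hA35).1
    | exact hN42 (hk3 v4 v3 v2 v5 ‹rel v4 v3› ‹rel v3 v2› ‹rel v2 v5› hA45).1
    | exact hN02 (hk3 v5 v0 v1 v2 ‹rel v5 v0› ‹rel v0 v1› ‹rel v1 v2› hA52).2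
    | exact hN14 (hk3 v5 v1 v0 v4 ‹rel v5 v1› ‹rel v1 v0› ‹rel v0 v4› hA54).2
    | exact hN13 (hk3 v5 v1 v2 v3 ‹rel v5 v1› ‹rel v1 v2› ‹rel v2 v3› hA53).2
    | exact hN20 (hk3 v5 v2 v1 v0 ‹rel v5 v2› ‹rel v2 v1› ‹rel v1 v0› hA50).2
    | exact hN30 (hk3 v5 v3 v4 v0 ‹rel v5 v3› ‹rel v3 v4› ‹rel v4 v0› hA50).2
    | exact hN42 (hk3 v5 v4 v3 v2 ‹rel v5 v4› ‹rel v4 v3› ‹rel v3 v2› hA52).2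
end W5

lemma shift_iff (u v : Fin 2 → Fin 3) : debruijnShift 2 3 u v ↔ v 0 = u 1 := by
  constructor
  · intro h
    simpa using h 0 (by omega)
  · intro h i hi
    have hi0 : i = 0 := by omega
    subst hi0
    simpa using h

lemma adj_iff (u v : Fin 2 → Fin 3) :
    (simplifiedDeBruijn 2 3).Adj u v ↔ u ≠ v ∧ (v 0 = u 1 ∨ u 0 = v 1) := by
  simp [simplifiedDeBruijn, SimpleGraph.fromRel_adj, shift_iff]

end DB23

/-- The simplified de Bruijn graph `S(2,3)` is not word-representable. -/
theorem simplifiedDeBruijn_two_three_not_wordRepresentable :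
    ¬ WordRepresentable (simplifiedDeBruijn 2 3) := by
  intro h
  obtain ⟨rel, ⟨hsub, hasym⟩, hacyc, hshort⟩ := DB23.exists_semitrans h
  have htot : ∀ u v, (simplifiedDeBruijn 2 3).Adj u v → rel u v ∨ rel v u := by
    intro u v hadj
    by_cases hr : rel u v
    · exact Or.inl hr
    · exact Or.inr (by by_contra hr2; exact hr ((hasym u v hadj).mpr hr2))
  have htri : ∀ a b c, rel a b → rel b c → rel c a → False := by
    intro a b c h1 h2 h3
    exact hacyc a (Relation.TransGen.head h1
      (Relation.TransGen.head h2 (Relation.TransGen.single h3)))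
  have hk3 : ∀ a b c d, rel a b → rel b c → rel c d →
      (simplifiedDeBruijn 2 3).Adj a d →
      (simplifiedDeBruijn 2 3).Adj a c ∧ (simplifiedDeBruijn 2 3).Adj b d := by
    intro a b c d h1 h2 h3 hadj
    have hh := hshort 3 ![a, b, c, d] ?_
    · rcases hh with hh | hh
      · exact absurd (by simpa using hadj) hh
      · exact ⟨hsub _ _ (by simpa using hh 0 2 (by decide)),
          hsub _ _ (by simpa using hh 1 3 (by decide))⟩
    · intro i
      fin_cases i
      · simpa using h1
      · simpa using h2
      · simpa using h3
  refine DB23.no_w5 (simplifiedDeBruijn 2 3).Adj rel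
    ![1,0] ![1,1] ![1,2] ![2,0] ![0,0] ![0,1] htot htri hk3
    (by rw [DB23.adj_iff]; decide) (by rw [DB23.adj_iff]; decide) (by rw [DB23.adj_iff]; decide) (by rw [DB23.adj_iff]; decide) (by rw [DB23.adj_iff]; decide) (by rw [DB23.adj_iff]; decide) (by rw [DB23.adj_iff]; decide) (by rw [DB23.adj_iff]; decide) (by rw [DB23.adj_iff]; decide) (by rw [DB23.adj_iff]; decide) (by rw [DB23.adj_iff]; decide) (by rw [DB23.adj_iff]; decide) (by rw [DB23.adj_iff]; decide) (by rw [DB23.adj_iff]; decide) (by rw [DB23.adj_iff]; decide) (by rw [DB23.adj_iff]; decide) (by rw [DB23.adj_iff]; decide) (by rw [DB23.adj_iff]; decide) (by rw [DB23.adj_iff]; decide) (by rw [DB23.adj_iff]; decide) (by rw [DB23.adj_iff]; decide) (by rw [DB23.adj_iff]; decide) (by rw [DB23.adj_iff]; decide) (by rw [DB23.adj_iff]; decide) (by rw [DB23.adj_iff]; decide) (by rw [DB23.adj_iff]; decide) (by rw [DB23.adj_iff]; decide) (by rw [DB23.adj_iff]; decide) (by rw [DB23.adj_iff]; decide) (by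 rw [DB23.adj_iff]; decide)
end

section
/- The wheel graph W5, obtained from the cycle graph C5 on five vertices by adding one new vertex adjacent to all five cycle vertices, is not word-representable. -/
/-- The wheel graph `W₅` on six vertices: vertices `0,…,4` form a 5-cycle and
vertex `5` (the hub) is adjacent to all of them. -/
def wheel5 : SimpleGraph (Fin 6) :=
  SimpleGraph.fromRel
    (fun i j => (i = 5 ∧ j ≠ 5) ∨
      ((i : ℕ) < 5 ∧ (j : ℕ) < 5 ∧ (j : ℕ) = ((i : ℕ) + 1) % 5))

/-! ### Auxiliary list lemmas -/

open List

section Aux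
variable {V : Type*} [DecidableEq V]

lemma indexOf_lt_of_mem_take {a : V} : ∀ {l : List V} {n : ℕ}, a ∈ l.take n → l.idxOf a < n
  | [], n, h => by simp at h
  | b :: l, 0, h => by simp at h
  | b :: l, n+1, h => by
    rw [List.take_succ_cons] at h
    rcases List.mem_cons.mp h with rfl | h'
    · simp
    · by_cases hab : a = b
      · subst hab; simp
      · rw [List.idxOf_cons_ne _ (by exact fun hc => hab hc.symm)]
        exact Nat.succ_lt_succ (indexOf_lt_of_mem_take h')

/-- In an alternating two-letter word starting with `x`, every prefix has
`#y ≤ #x ≤ #y + 1`. -/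
lemma alt_counts {x y : V} (hxy : x ≠ y) :
    ∀ (v u : List V), u.Chain' (· ≠ ·) → (∀ a ∈ u, a = x ∨ a = y) →
      (∀ a ∈ u.head?, a = x) →
      v <+: u → count y v ≤ count x v ∧ count x v ≤ count y v + 1
  | [], u => fun _ _ _ _ => by simp
  | [c], u => fun hch hmem hhd hv => by
      obtain ⟨t, rfl⟩ := hv
      have hc : c = x := hhd c rfl
      rw [hc]
      simp [hxy, hxy.symm, List.count_cons]
  | c :: d :: v, u => fun hch hmem hhd hv => by
      obtain ⟨t, rfl⟩ := hv
      simp only [List.cons_append] at hch hmem hhd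
      have hc : c = x := hhd c rfl
      have hcd : c ≠ d := (List.isChain_cons_cons.mp hch).1
      have hd : d = y := by
        rcases hmem d (by simp) with h | h
        · exact absurd (hc.trans h.symm) hcd
        · exact h
      have hch' := (List.isChain_cons_cons.mp hch).2
      have hchu : (v ++ t).Chain' (· ≠ ·) := hch'.tail
      have hhd' : ∀ a ∈ (v ++ t).head?, a = x := by
        intro a ha
        have hda : d ≠ a := (List.isChain_cons.mp hch').1 a ha
        have ham : a ∈ v ++ t := List.mem_of_mem_head? ha
        rcases hmem a (by simp [ham]) with h | h
        · exact h
        · exact absurd (hd.trans h.symm) hda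
      have hmemu : ∀ a ∈ v ++ t, a = x ∨ a = y := fun a h => hmem a (by simp [h])
      have IH := alt_counts hxy v (v ++ t) hchu hmemu hhd' ⟨t, rfl⟩
      rw [hc, hd]
      simp only [List.count_cons]
      simp [hxy, hxy.symm]
      omega

/-- If the first occurrence of `x` precedes the first occurrence of `y`, the first letter
of the word restricted to `{x, y}` is `x`. -/
lemma head?_filter_eq (w : List V) (x y : V) (hx : x ∈ w)
    (hlt : w.idxOf x < w.idxOf y) :
    (w.filter (fun z => decide (z = x ∨ z = y))).head? = some x := by
  set P : V → Bool := fun z => decide (z = x ∨ z = y) with hP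
  have hilen : w.idxOf x < w.length := List.idxOf_lt_length_iff.mpr hx
  have hwx : w[w.idxOf x] = x := List.getElem_idxOf hilen
  have hsplit : w = w.take (w.idxOf x) ++ x :: w.drop (w.idxOf x + 1) := by
    conv_lhs => rw [← List.take_append_drop (w.idxOf x) w]
    rw [List.drop_eq_getElem_cons hilen, hwx]
  have hnil : (w.take (w.idxOf x)).filter P = [] := by
    rw [List.filter_eq_nil_iff]
    intro a ha
    have hidx : w.idxOf a < w.idxOf x := indexOf_lt_of_mem_take ha
    simp only [hP, decide_eq_true_eq, not_or]
    constructor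
    · rintro rfl; exact absurd hidx (lt_irrefl _)
    · rintro rfl; exact absurd (hidx.trans hlt) (lt_irrefl _)
  conv_lhs => rw [hsplit]
  rw [List.filter_append, hnil, List.filter_cons]
  simp [hP]

lemma prefix_filter_exists (P : V → Bool) :
    ∀ (w v : List V), v <+: w.filter P → ∃ n, v = (w.take n).filter P
  | [], v, hv => ⟨0, by simpa using List.prefix_nil.mp (by simpa using hv)⟩
  | a :: w, v, hv => by
    by_cases hPa : P a
    · rw [List.filter_cons_of_pos hPa] at hv
      rcases v with _ | ⟨b, v⟩
      · exact ⟨0, by simp⟩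
      · obtain ⟨rfl, hv'⟩ := List.cons_prefix_cons.mp hv
        obtain ⟨n, hn⟩ := prefix_filter_exists P w v hv'
        exact ⟨n+1, by rw [List.take_succ_cons, List.filter_cons_of_pos hPa, ← hn]⟩
    · rw [List.filter_cons_of_neg (by simpa using hPa)] at hv
      obtain ⟨n, hn⟩ := prefix_filter_exists P w v hv
      exact ⟨n+1, by rw [List.take_succ_cons, List.filter_cons_of_neg (by simpa using hPa), hn]⟩

/-- Prefix-count property: in every prefix of `w`, `#y ≤ #x ≤ #y + 1`. -/
def PC (w : List V) (x y : V) : Prop :=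
  ∀ n : ℕ, count y (w.take n) ≤ count x (w.take n) ∧
    count x (w.take n) ≤ count y (w.take n) + 1

lemma pc_of_alternate {w : List V} {x y : V} (hxy : x ≠ y) (hx : x ∈ w)
    (hlt : w.idxOf x < w.idxOf y) (halt : Alternate w x y) : PC w x y := by
  intro n
  set P : V → Bool := fun z => decide (z = x ∨ z = y) with hP
  have hmemu : ∀ a ∈ w.filter P, a = x ∨ a = y := by
    intro a ha
    have := (List.mem_filter.mp ha).2
    simpa [hP] using this
  have hhd : ∀ a ∈ (w.filter P).head?, a = x := by
    intro a ha
    rw [head?_filter_eq w x y hx hlt] at ha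
    simpa using ha.symm
  have hpref : (w.take n).filter P <+: w.filter P := (List.take_prefix n w).filter P
  have h := alt_counts hxy _ _ halt hmemu hhd hpref
  have hcx : count x ((w.take n).filter P) = count x (w.take n) :=
    List.count_filter (by simp [hP])
  have hcy : count y ((w.take n).filter P) = count y (w.take n) :=
    List.count_filter (by simp [hP])
  omega

lemma alternate_of_pc {w : List V} {x y : V} (hxy : x ≠ y) (h : PC w x y) :
    Alternate w x y := by
  set P : V → Bool := fun z => decide (z = x ∨ z = y) with hP
  set u := w.filter P with hu
  have key : ∀ m, count y (u.take m) ≤ count x (u.take m) ∧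
      count x (u.take m) ≤ count y (u.take m) + 1 := by
    intro m
    obtain ⟨n, hn⟩ := prefix_filter_exists P w (u.take m) (List.take_prefix m u)
    have hcx : count x (u.take m) = count x (w.take n) := by
      rw [hn]; exact List.count_filter (by simp [hP])
    have hcy : count y (u.take m) = count y (w.take n) := by
      rw [hn]; exact List.count_filter (by simp [hP])
    have := h n
    omega
  rw [Alternate, ← hu, List.Chain', List.isChain_iff_getElem]
  intro i hi
  intro hne
  have hi1 : i + 1 < u.length := by omega
  have hi0 : i < u.length := by omega
  have hmem : u[i] = x ∨ u[i] = y := by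
    have h1 : u[i] ∈ u := List.getElem_mem _
    have := (List.mem_filter.mp (show u[i] ∈ List.filter P w from h1)).2
    simpa [hP] using this
  have ht1 : u.take (i+1) = u.take i ++ [u[i]] := by
    rw [List.take_succ]; simp [List.getElem?_eq_getElem hi0]
  have ht2 : u.take (i+2) = u.take i ++ [u[i], u[i+1]] := by
    rw [show i+2 = (i+1)+1 from rfl, List.take_succ, ht1, List.getElem?_eq_getElem hi1]
    simp only [Option.toList_some, List.append_assoc, List.cons_append, List.nil_append]
  have h0 := key i
  have h1 := key (i+1)
  have h2 := key (i+2)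
  rw [ht1] at h1
  rw [ht2] at h2
  rw [← hne] at h2
  rcases hmem with hx' | hy'
  · rw [hx'] at h1 h2
    simp [List.count_append, hxy, hxy.symm] at h1 h2
    omega
  · rw [hy'] at h1 h2
    simp [List.count_append, hxy, hxy.symm] at h1 h2
    omega

end Aux

/-! ### The finite check on orientations of `W₅` -/

instance wheel5.adjDecidable : DecidableRel wheel5.Adj := fun a b =>
  decidable_of_iff' _ (SimpleGraph.fromRel_adj _ a b)

def adjB (i j : Fin 6) : Bool :=
  !(i.val == j.val) &&
    (i.val == 5 || j.val == 5 || j.val == (i.val + 1) % 5 || i.val == (j.val + 1) % 5)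

lemma adjB_iff : ∀ i j : Fin 6, adjB i j = true ↔ wheel5.Adj i j := by decide

def okQuad (a b c d : Fin 6) : Bool :=
  adjB a b && adjB b c && adjB c d && adjB a d && !(adjB a c && adjB b d)

def quads : List (ℕ × ℕ × ℕ × ℕ) :=
  [(0,1,2,3),(0,1,2,4),(0,1,2,5),(0,1,3,4),(0,1,3,5),(0,1,4,5),(0,2,3,4),
   (0,2,3,5),(0,2,4,5),(0,3,4,5),(1,2,3,4),(1,2,3,5),(1,2,4,5),(1,3,4,5),(2,3,4,5)]

lemma quads_lt5 : ∀ q ∈ quads, q.1 < 6 ∧ q.2.1 < 6 ∧ q.2.2.1 < 6 ∧ q.2.2.2 < 6 := by decide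

lemma quads_lt : ∀ q ∈ quads, q.1 < q.2.1 ∧ q.2.1 < q.2.2.1 ∧ q.2.2.1 < q.2.2.2 := by decide

def l6 : List (Fin 6) := [0,1,2,3,4,5]

def vlist (v : List (Fin 6)) : ℕ → Fin 6 := fun i => v.getD i 0

def checkN : Bool :=
  l6.all fun v0 => (l6.erase v0).all fun v1 => ((l6.erase v0).erase v1).all fun v2 =>
  ((((l6.erase v0).erase v1).erase v2)).all fun v3 =>
  (((((l6.erase v0).erase v1).erase v2)).erase v3).all fun v4 =>
  ((((((l6.erase v0).erase v1).erase v2)).erase v3).erase v4).all fun v5 =>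
    quads.any fun q =>
      okQuad (vlist [v0,v1,v2,v3,v4,v5] q.1) (vlist [v0,v1,v2,v3,v4,v5] q.2.1)
        (vlist [v0,v1,v2,v3,v4,v5] q.2.2.1) (vlist [v0,v1,v2,v3,v4,v5] q.2.2.2)

lemma checkN_true : checkN = true := by decide

lemma l6_mem : ∀ x : Fin 6, x ∈ l6 := by decide

/-- For every linear order (given by an injective `g`) on the vertices of `W₅`, there is
an increasing path `a → b → c → d` along edges with `a, d` adjacent but `a, c` or `b, d`
non-adjacent. -/
lemma keyFinite (g : Fin 6 → Fin 6) (hg : Function.Injective g) :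
    ∃ a b c d : Fin 6, g a < g b ∧ g b < g c ∧ g c < g d ∧
      wheel5.Adj a b ∧ wheel5.Adj b c ∧ wheel5.Adj c d ∧ wheel5.Adj a d ∧
      ¬(wheel5.Adj a c ∧ wheel5.Adj b d) := by
  have hbij : Function.Bijective g := (Finite.injective_iff_bijective).mp hg
  set e := Equiv.ofBijective g hbij with he
  set p : Fin 6 → Fin 6 := fun i => e.symm i with hp
  have hgp : ∀ i : Fin 6, g (p i) = i := fun i => e.apply_symm_apply i
  have hpinj : Function.Injective p := fun i j h => by
    have := congrArg g h; rwa [hgp, hgp] at this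
  have hvl : ∀ (n : ℕ) (hn : n < 6), vlist [p 0, p 1, p 2, p 3, p 4, p 5] n = p ⟨n, hn⟩ := by
    intro n hn
    interval_cases n <;> rfl
  have h := checkN_true
  unfold checkN at h
  rw [List.all_eq_true] at h
  have h1 := h (p 0) (l6_mem _)
  rw [List.all_eq_true] at h1
  have h2 := h1 (p 1) ((List.mem_erase_of_ne (by intro hc; exact absurd (hpinj hc) (by decide))).mpr (l6_mem _))
  rw [List.all_eq_true] at h2
  have h3 := h2 (p 2) (by
    rw [List.mem_erase_of_ne (by intro hc; exact absurd (hpinj hc) (by decide)),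
       List.mem_erase_of_ne (by intro hc; exact absurd (hpinj hc) (by decide))]
    exact l6_mem _)
  rw [List.all_eq_true] at h3
  have h4 := h3 (p 3) (by
    rw [List.mem_erase_of_ne (by intro hc; exact absurd (hpinj hc) (by decide)),
       List.mem_erase_of_ne (by intro hc; exact absurd (hpinj hc) (by decide)),
       List.mem_erase_of_ne (by intro hc; exact absurd (hpinj hc) (by decide))]
    exact l6_mem _)
  rw [List.all_eq_true] at h4
  have h5 := h4 (p 4) (by
    rw [List.mem_erase_of_ne (by intro hc; exact absurd (hpinj hc) (by decide)),
       List.mem_erase_of_ne (by intro hc; exact absurd (hpinj hc) (by decide)),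
       List.mem_erase_of_ne (by intro hc; exact absurd (hpinj hc) (by decide)),
       List.mem_erase_of_ne (by intro hc; exact absurd (hpinj hc) (by decide))]
    exact l6_mem _)
  rw [List.all_eq_true] at h5
  have h6 := h5 (p 5) (by
    rw [List.mem_erase_of_ne (by intro hc; exact absurd (hpinj hc) (by decide)),
       List.mem_erase_of_ne (by intro hc; exact absurd (hpinj hc) (by decide)),
       List.mem_erase_of_ne (by intro hc; exact absurd (hpinj hc) (by decide)),
       List.mem_erase_of_ne (by intro hc; exact absurd (hpinj hc) (by decide)),
       List.mem_erase_of_ne (by intro hc; exact absurd (hpinj hc) (by decide))]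
    exact l6_mem _)
  rw [List.any_eq_true] at h6
  obtain ⟨q, hqmem, hok⟩ := h6
  obtain ⟨hlt1, hlt2, hlt3⟩ := quads_lt q hqmem
  obtain ⟨hb1, hb2, hb3, hb4⟩ := quads_lt5 q hqmem
  rw [hvl _ hb1, hvl _ hb2, hvl _ hb3, hvl _ hb4] at hok
  simp only [okQuad, Bool.and_eq_true, Bool.not_eq_true', Bool.and_eq_false_iff] at hok
  obtain ⟨⟨⟨⟨hab, hbc⟩, hcd⟩, had⟩, hneg⟩ := hok
  refine ⟨p ⟨q.1, hb1⟩, p ⟨q.2.1, hb2⟩, p ⟨q.2.2.1, hb3⟩, p ⟨q.2.2.2, hb4⟩, ?_, ?_, ?_,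
    (adjB_iff _ _).mp hab, (adjB_iff _ _).mp hbc, (adjB_iff _ _).mp hcd, (adjB_iff _ _).mp had, ?_⟩
  · rw [hgp, hgp]; exact hlt1
  · rw [hgp, hgp]; exact hlt2
  · rw [hgp, hgp]; exact hlt3
  · rintro ⟨hac, hbd⟩
    rcases hneg with hfalse | hfalse
    · rw [(adjB_iff _ _).mpr hac] at hfalse; exact Bool.noConfusion hfalse
    · rw [(adjB_iff _ _).mpr hbd] at hfalse; exact Bool.noConfusion hfalse

/-! ### Main theorem -/

/-- The wheel graph `W₅` is not word-representable. -/
theorem wheel5_not_wordRepresentable : ¬ WordRepresentable wheel5 := by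
  rintro ⟨w, hmem, hrep⟩
  -- the first-occurrence function
  set f : Fin 6 → ℕ := fun v => w.idxOf v with hf
  have finj : Function.Injective f := by
    intro a b h
    have h1 := List.getElem_idxOf (List.idxOf_lt_length_iff.mpr (hmem a))
    have h2 := List.getElem_idxOf (List.idxOf_lt_length_iff.mpr (hmem b))
    simp only [hf] at h
    rw [← h1, ← h2]
    simp only [h]
  -- the rank function
  have hcard : ∀ a : Fin 6, (Finset.univ.filter (fun b => f b < f a)).card < 6 := by
    intro a
    have hsub : Finset.univ.filter (fun b => f b < f a) ⊆ Finset.univ.erase a := by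
      intro b hb
      rcases Finset.mem_filter.mp hb with ⟨-, hlt⟩
      exact Finset.mem_erase.mpr ⟨fun hc => absurd (hc ▸ hlt) (lt_irrefl _), Finset.mem_univ _⟩
    calc (Finset.univ.filter (fun b => f b < f a)).card
        ≤ (Finset.univ.erase a).card := Finset.card_le_card hsub
      _ = 5 := by rw [Finset.card_erase_of_mem (Finset.mem_univ _)]; simp
      _ < 6 := by norm_num
  set g : Fin 6 → Fin 6 := fun a => ⟨(Finset.univ.filter (fun b => f b < f a)).card, hcard a⟩
    with hg
  have gmono : ∀ {a b : Fin 6}, f a < f b → g a < g b := by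
    intro a b hab
    have hss : Finset.univ.filter (fun c => f c < f a) ⊂ Finset.univ.filter (fun c => f c < f b) := by
      rw [Finset.ssubset_iff_of_subset (by
        intro c hc
        rcases Finset.mem_filter.mp hc with ⟨-, hlt⟩
        exact Finset.mem_filter.mpr ⟨Finset.mem_univ _, hlt.trans hab⟩)]
      exact ⟨a, Finset.mem_filter.mpr ⟨Finset.mem_univ _, hab⟩,
        fun hc => absurd (Finset.mem_filter.mp hc).2 (lt_irrefl _)⟩
    exact Finset.card_lt_card hss
  have giff : ∀ {a b : Fin 6}, g a < g b → f a < f b := by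
    intro a b hab
    rcases lt_trichotomy (f a) (f b) with h | h | h
    · exact h
    · rw [finj h] at hab; exact absurd hab (lt_irrefl _)
    · exact absurd (lt_trans (gmono h) hab) (lt_irrefl _)
  have ginj : Function.Injective g := by
    intro a b h
    rcases lt_trichotomy (f a) (f b) with hlt | heq | hlt
    · exact absurd h (ne_of_lt (gmono hlt))
    · exact finj heq
    · exact absurd h.symm (ne_of_lt (gmono hlt))
  obtain ⟨a, b, c, d, g1, g2, g3, hab, hbc, hcd, had, hneg⟩ := keyFinite g ginj
  have f1 : f a < f b := giff g1
  have f2 : f b < f c := giff g2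
  have f3 : f c < f d := giff g3
  have ne_of_flt : ∀ {x y : Fin 6}, f x < f y → x ≠ y := by
    intro x y h hc
    subst hc
    exact absurd h (lt_irrefl _)
  have pcab : PC w a b := pc_of_alternate (ne_of_flt f1) (hmem a) f1
    ((hrep a b (ne_of_flt f1)).mp hab)
  have pcbc : PC w b c := pc_of_alternate (ne_of_flt f2) (hmem b) f2
    ((hrep b c (ne_of_flt f2)).mp hbc)
  have pccd : PC w c d := pc_of_alternate (ne_of_flt f3) (hmem c) f3
    ((hrep c d (ne_of_flt f3)).mp hcd)
  have fad : f a < f d := f1.trans (f2.trans f3)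
  have pcad : PC w a d := pc_of_alternate (ne_of_flt fad) (hmem a) fad
    ((hrep a d (ne_of_flt fad)).mp had)
  have pcac : PC w a c := by
    intro n
    have := pcab n; have := pcbc n; have := pccd n; have := pcad n
    omega
  have pcbd : PC w b d := by
    intro n
    have := pcab n; have := pcbc n; have := pccd n; have := pcad n
    omega
  have hac : wheel5.Adj a c :=
    (hrep a c (ne_of_flt (f1.trans f2))).mpr (alternate_of_pc (ne_of_flt (f1.trans f2)) pcac)
  have hbd : wheel5.Adj b d :=
    (hrep b d (ne_of_flt (f2.trans f3))).mpr (alternate_of_pc (ne_of_flt (f2.trans f3)) pcbd)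
  exact hneg ⟨hac, hbd⟩
end

section
/- Suppose an undirected graph G has a cycle C = x1 x2 ... xm x1 with m ≥ 4 whose vertex set {x1, ..., xm} does not induce a clique in G. If G is oriented semi-transitively and m−2 of the edges of C are oriented in the same direction around the cycle (i.e., from xi to x_{i+1}, indices modulo m, or all from x_{i+1} to xi), then the remaining two edges of C are oriented in the opposite direction around the cycle. -/
lemma flip_orientation {V : Type*} {G : SimpleGraph V} {rel : V → V → Prop}
    (hor : IsOrientation G rel) : IsOrientation G (fun a b => rel b a) := by
  constructor
  · intro x y h
    exact (hor.1 y x h).symm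
  · intro x y hadj
    have h1 := hor.2 y x hadj.symm
    tauto

lemma flip_semiTransitive {V : Type*} {G : SimpleGraph V} {rel : V → V → Prop}
    (hst : IsSemiTransitive G rel) : IsSemiTransitive G (fun a b => rel b a) := by
  constructor
  · intro v hv
    exact hst.1 v (Relation.transGen_swap.mp hv)
  · intro k q hq
    have hpath : ∀ i : Fin k, rel ((fun t => q t.rev) i.castSucc) ((fun t => q t.rev) i.succ) := by
      intro i
      simp only [Fin.rev_castSucc, Fin.rev_succ]
      exact hq i.rev
    rcases hst.2 k (fun t => q t.rev) hpath with h | h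
    · left
      simp only [Fin.rev_zero, Fin.rev_last] at h
      intro hadj
      exact h hadj.symm
    · right
      intro a b hab
      have h2 := h b.rev a.rev (Fin.rev_lt_rev.mpr hab)
      simpa [Fin.rev_rev] using h2

/-- If all edges of the cycle, except possibly the one leaving `j`, are oriented forward,
then the whole directed path around the cycle has adjacent endpoints, so by
semi-transitivity the vertex set induces a clique: contradiction. -/
lemma cycle_forward_absurd {V : Type*} {G : SimpleGraph V} {rel : V → V → Prop}
    (hor : IsOrientation G rel) (hst : IsSemiTransitive G rel)
    (k : ℕ) (x : Fin (k + 2) → V)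
    (hcyc : ∀ i : Fin (k + 2), G.Adj (x i) (x (i + 1)))
    (hnotclique : ¬ ∀ i j : Fin (k + 2), i ≠ j → G.Adj (x i) (x j))
    (j : Fin (k + 2)) (hfwd : ∀ l : Fin (k + 2), l ≠ j → rel (x l) (x (l + 1))) :
    False := by
  have hlast : (Fin.last (k + 1) : Fin (k + 2)) + 1 = 0 := by
    ext
    simp [Fin.add_def, Fin.last]
  set p : Fin (k + 1 + 1) → V := fun t => x (j + 1 + t) with hp
  have hpath : ∀ i : Fin (k + 1), rel (p i.castSucc) (p i.succ) := by
    intro i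
    have hsucc : (j + 1 + i.castSucc) + 1 = j + 1 + i.succ := by
      rw [add_assoc, Fin.coeSucc_eq_succ]
    have hne : j + 1 + i.castSucc ≠ j := by
      intro h
      have h2 : j + (1 + i.castSucc) = j + 0 := by
        rw [← add_assoc, h, add_zero]
      have h3 : (1 : Fin (k + 2)) + i.castSucc = 0 := add_left_cancel h2
      rw [add_comm (1 : Fin (k + 2)) i.castSucc, Fin.coeSucc_eq_succ] at h3
      exact Fin.succ_ne_zero i h3
    have := hfwd (j + 1 + i.castSucc) hne
    rwa [hsucc] at this
  have hp0 : p 0 = x (j + 1) := by simp [hp]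
  have hpl : p (Fin.last (k + 1)) = x j := by
    show x (j + 1 + Fin.last (k + 1)) = x j
    congr 1
    rw [add_assoc, add_comm (1 : Fin (k + 2)), hlast, add_zero]
  rcases hst.2 (k + 1) p hpath with h | h
  · rw [hp0, hpl] at h
    exact h (hcyc j).symm
  · apply hnotclique
    intro a b hab
    have hpa : p (a - (j + 1)) = x a := by
      show x (j + 1 + (a - (j + 1))) = x a
      congr 1
      exact add_sub_cancel _ _
    have hpb : p (b - (j + 1)) = x b := by
      show x (j + 1 + (b - (j + 1))) = x b
      congr 1
      exact add_sub_cancel _ _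
    have hne : a - (j + 1) ≠ b - (j + 1) := by
      intro heq
      apply hab
      have := congrArg (· + (j + 1)) heq
      simpa [sub_add_cancel] using this
    rcases lt_or_gt_of_ne hne with hlt | hlt
    · have := hor.1 _ _ (h _ _ hlt)
      rwa [hpa, hpb] at this
    · have := hor.1 _ _ (h _ _ hlt)
      rw [hpa, hpb] at this
      exact this.symm

/-- Suppose a graph `G` is oriented semi-transitively by `rel`, and `x 0, x 1, …, x (m-1)`
(`m ≥ 4`) is a cycle in `G` whose vertex set does not induce a clique, where `nxt` is the
cyclic successor of indices. If the `m - 2` edges of the cycle other than the ones leaving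
`i` and `j` are all oriented forward around the cycle (respectively, all backward), then
the remaining two edges are oriented in the opposite direction. -/
theorem semiTransitive_cycle_lemma {V : Type*} (G : SimpleGraph V) (rel : V → V → Prop)
    (hor : IsOrientation G rel) (hst : IsSemiTransitive G rel)
    (m : ℕ) (hm : 4 ≤ m) (x : Fin m → V) (hinj : Function.Injective x)
    (nxt : Fin m → Fin m) (hnxt : ∀ i : Fin m, (nxt i : ℕ) = ((i : ℕ) + 1) % m)
    (hcyc : ∀ i : Fin m, G.Adj (x i) (x (nxt i)))
    (hnotclique : ¬ ∀ i j : Fin m, i ≠ j → G.Adj (x i) (x j))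
    (i j : Fin m) (hij : i ≠ j) :
    ((∀ l : Fin m, l ≠ i → l ≠ j → rel (x l) (x (nxt l))) →
      rel (x (nxt i)) (x i) ∧ rel (x (nxt j)) (x j)) ∧
    ((∀ l : Fin m, l ≠ i → l ≠ j → rel (x (nxt l)) (x l)) →
      rel (x i) (x (nxt i)) ∧ rel (x j) (x (nxt j))) := by
  obtain ⟨k, rfl⟩ : ∃ k, m = k + 2 := ⟨m - 2, by omega⟩
  have hnxt' : ∀ l : Fin (k + 2), nxt l = l + 1 := by
    intro l
    ext
    rw [hnxt, Fin.add_def]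
    simp [Fin.val_one]
  simp only [hnxt'] at hcyc ⊢
  constructor
  · intro hfwd
    have hi : ¬ rel (x i) (x (i + 1)) := by
      intro hrel
      refine cycle_forward_absurd hor hst k x hcyc hnotclique j ?_
      intro l hl
      by_cases hli : l = i
      · subst hli; exact hrel
      · exact hfwd l hli hl
    have hj : ¬ rel (x j) (x (j + 1)) := by
      intro hrel
      refine cycle_forward_absurd hor hst k x hcyc hnotclique i ?_
      intro l hl
      by_cases hlj : l = j
      · subst hlj; exact hrel
      · exact hfwd l hl hlj
    exact ⟨(hor.2 _ _ (hcyc i).symm).mpr hi, (hor.2 _ _ (hcyc j).symm).mpr hj⟩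
  · intro hbwd
    have hor' := flip_orientation hor
    have hst' := flip_semiTransitive hst
    have hi : ¬ rel (x (i + 1)) (x i) := by
      intro hrel
      refine cycle_forward_absurd hor' hst' k x hcyc hnotclique j ?_
      intro l hl
      by_cases hli : l = i
      · subst hli; exact hrel
      · exact hbwd l hli hl
    have hj : ¬ rel (x (j + 1)) (x j) := by
      intro hrel
      refine cycle_forward_absurd hor' hst' k x hcyc hnotclique i ?_
      intro l hl
      by_cases hlj : l = j
      · subst hlj; exact hrel
      · exact hbwd l hl hlj
    exact ⟨(hor.2 _ _ (hcyc i)).mpr hi, (hor.2 _ _ (hcyc j)).mpr hj⟩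
end
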